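/- arXiv:1111.0235 — 5 statements merged into one kernel-verified Lean document; each statement's English description precedes it below -/
import Mathlib

section
/- Let K = (a_{ij}) be an m×m complex matrix and let K_θ = E[M_σ K M_σ^*], where σ is a random permutation distributed according to the Ewens measure with parameter θ > 0. Then for every diagonal index i, (K_θ)_{ii} = ((θ−1)/(θ+m−1)) a_{ii} + (1/(θ+m−1)) Tr(K). -/
open Matrix

/-- The number of cycles of `σ` (including fixed points as 1-cycles). -/
def cycleCount {m : ℕ} (σ : Equiv.Perm (Fin m)) : ℕ :=
  (m - σ.support.card) + σ.cycleType.card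

/-- The Ewens measure with parameter `θ` on the symmetric group. -/
noncomputable def ewens {m : ℕ} (θ : ℝ) (σ : Equiv.Perm (Fin m)) : ℝ :=
  θ ^ cycleCount σ / ∏ k ∈ Finset.range m, (θ + k)

/-- The permutation matrix of `σ`, whose `i`-th row is the standard basis vector `e_{σ i}`. -/
def permMat {m : ℕ} (σ : Equiv.Perm (Fin m)) : Matrix (Fin m) (Fin m) ℂ :=
  Matrix.of fun i j => if j = σ i then 1 else 0

namespace EwensAux

open Equiv Equiv.Perm Finset

variable {α : Type*} [Fintype α] [DecidableEq α]

def ccount (σ : Perm α) : ℕ :=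
  (Fintype.card α - σ.support.card) + Multiset.card σ.cycleType

/-- cycle insertion: multiplying a cycle `c` by `swap a b` where `c a = a`, `c b ≠ b`
gives a cycle with support `insert a c.support`. -/
theorem swap_mul_isCycle {c : Perm α} (hc : c.IsCycle) {a b : α} (ha : c a = a) (hb : c b ≠ b) :
    (swap a b * c).IsCycle ∧ (swap a b * c).support = insert a c.support := by
  have hab : a ≠ b := fun h => hb (h ▸ ha)
  have hanotin : a ∉ c.support := by simp [ha]
  set c' := swap a b * c with hc'
  have happ : ∀ x, c' x = swap a b (c x) := fun x => rfl
  have hsupp : c'.support = insert a c.support := by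
    ext x
    simp only [Finset.mem_insert, Equiv.Perm.mem_support, happ]
    constructor
    · intro h
      by_cases hx : x = a
      · exact Or.inl hx
      · right
        intro hcx
        rw [hcx] at h
        apply h
        rw [swap_apply_of_ne_of_ne hx]
        rintro rfl; exact hb hcx
    · rintro (rfl | h)
      · rw [ha, swap_apply_left]; exact hab.symm
      · intro hcontra
        have hcb : c x ≠ a := by
          rintro hcxa
          have hxa : x = a := c.injective (hcxa.trans ha.symm)
          subst hxa
          exact h ha
        by_cases hcx : c x = b
        · rw [hcx, swap_apply_right] at hcontra
          exact hanotin (hcontra ▸ Equiv.Perm.mem_support.2 h)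
        · rw [swap_apply_of_ne_of_ne hcb hcx] at hcontra
          exact h hcontra
  refine ⟨⟨a, ?_, ?_⟩, hsupp⟩
  · show c' a ≠ a
    rw [happ, ha, swap_apply_left]; exact fun h => hab h.symm
  · intro y hy
    have hy' : y ∈ c'.support := Equiv.Perm.mem_support.2 hy
    rw [hsupp, Finset.mem_insert] at hy'
    rcases hy' with rfl | hy'
    · exact Equiv.Perm.SameCycle.refl _ _
    -- y ∈ c.support; show SameCycle c' a y; we show SameCycle c' y a and take symm
    have hyne : c y ≠ y := Equiv.Perm.mem_support.1 hy'
    have key : ∀ k : ℕ, (c' ^ k) y = (c ^ k) y ∨ c'.SameCycle y a := by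
      intro k
      induction k with
      | zero => left; simp
      | succ k ih =>
        rcases ih with ih | ih
        · have hmem : (c ^ (k+1)) y ∈ c.support :=
            Equiv.Perm.pow_apply_mem_support.2 hy'
          have hne_a : (c ^ (k+1)) y ≠ a := fun h => hanotin (h ▸ hmem)
          have hck : c ((c ^ k) y) = (c ^ (k+1)) y := by
            rw [pow_succ', Equiv.Perm.mul_apply]
          by_cases hzb : (c ^ (k+1)) y = b
          · right
            refine ⟨((k+1 : ℕ) : ℤ), ?_⟩
            rw [zpow_natCast, pow_succ', Equiv.Perm.mul_apply, ih, happ, hck, hzb,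
              swap_apply_right]
          · left
            rw [pow_succ', Equiv.Perm.mul_apply, ih, happ, hck,
              swap_apply_of_ne_of_ne hne_a hzb]
        · right; exact ih
    obtain ⟨n, hn⟩ := hc.exists_pow_eq hyne hb
    rcases key n with hkey | hkey
    · -- c'^n y = b = c' a
      have : c' a = b := by rw [happ, ha, swap_apply_left]
      have h1 : c'.SameCycle y (c' a) := ⟨(n : ℤ), by rw [zpow_natCast, hkey, hn, this]⟩
      have h2 : c'.SameCycle (c' a) a := ⟨(-1 : ℤ), by simp⟩
      exact (h1.trans h2).symm
    · exact hkey.symm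

theorem ccount_swap_mul {σ : Perm α} {a b : α} (hab : a ≠ b) (ha : σ a = a) :
    ccount σ = ccount (swap a b * σ) + 1 := by
  have hanotin : a ∉ σ.support := by simp [ha]
  by_cases hb : σ b = b
  · -- disjoint case
    have hd : Disjoint (swap a b) σ := by
      intro x
      by_cases hx : x = a ∨ x = b
      · rcases hx with rfl | rfl
        · exact Or.inr ha
        · exact Or.inr hb
      · push_neg at hx
        exact Or.inl (swap_apply_of_ne_of_ne hx.1 hx.2)
    have hct : (swap a b * σ).cycleType = {2} + σ.cycleType := by
      rw [hd.cycleType_mul]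
      congr 1
      rw [(isCycle_swap hab).cycleType, support_swap hab]
      simp [hab]
    have hs : (swap a b * σ).support.card = 2 + σ.support.card := by
      rw [hd.card_support_mul, card_support_swap hab]
    have hle : 2 + σ.support.card ≤ Fintype.card α := by
      rw [← hs]; exact Finset.card_le_univ _
    simp only [ccount, hct, hs]
    simp only [Multiset.card_add, Multiset.card_singleton]
    omega
  · -- merge case
    set c := σ.cycleOf b with hcdef
    have hc : c.IsCycle := isCycle_cycleOf σ hb
    have hcb : c b ≠ b := by rw [hcdef, cycleOf_apply_self]; exact hb
    have hmem : c ∈ σ.cycleFactorsFinset :=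
      cycleOf_mem_cycleFactorsFinset_iff.mpr (Equiv.Perm.mem_support.2 hb)
    have hca : c a = a := by
      by_contra h
      exact hanotin (support_cycleOf_le σ b (Equiv.Perm.mem_support.2 h))
    set g := σ * c⁻¹ with hgdef
    have hd : Disjoint g c := disjoint_mul_inv_of_mem_cycleFactorsFinset hmem
    have hσ : σ = g * c := by rw [hgdef]; group
    have hga : g a = a := by
      rw [hgdef, Equiv.Perm.mul_apply]
      have : c⁻¹ a = a := by
        rw [Equiv.Perm.inv_eq_iff_eq, hca]
      rw [this, ha]
    have hgb : g b = b := (hd b).resolve_right hcb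
    obtain ⟨hc'cyc, hc'supp⟩ := swap_mul_isCycle hc hca hcb
    set c' := swap a b * c with hc'def
    have hanotinc : a ∉ c.support := by simp [hca]
    have hd' : Disjoint g c' := by
      intro x
      by_cases hx : x ∈ c'.support
      · rw [hc'supp, Finset.mem_insert] at hx
        rcases hx with rfl | hx
        · exact Or.inl hga
        · exact Or.inl ((hd x).resolve_right (Equiv.Perm.mem_support.1 hx))
      · exact Or.inr (Equiv.Perm.notMem_support.1 hx)
    have hdsw : Disjoint (swap a b) g := by
      intro x
      by_cases hx : x = a ∨ x = b
      · rcases hx with rfl | rfl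
        · exact Or.inr hga
        · exact Or.inr hgb
      · push_neg at hx
        exact Or.inl (swap_apply_of_ne_of_ne hx.1 hx.2)
    have hτ : swap a b * σ = g * c' := by
      have hcm := hdsw.commute.eq
      rw [hc'def, hσ, ← mul_assoc, hcm, mul_assoc]
    have hcs : c'.support.card = c.support.card + 1 := by
      rw [hc'supp, Finset.card_insert_of_notMem hanotinc]
    -- counts
    have h1 : σ.support.card = g.support.card + c.support.card := by
      rw [hσ, hd.card_support_mul]
    have h2 : (swap a b * σ).support.card = g.support.card + c.support.card + 1 := by
      rw [hτ, hd'.card_support_mul, hcs]; ring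
    have h3 : Multiset.card σ.cycleType = Multiset.card g.cycleType + 1 := by
      rw [hσ, hd.cycleType_mul, Multiset.card_add, hc.cycleType]; simp
    have h4 : Multiset.card (swap a b * σ).cycleType = Multiset.card g.cycleType + 1 := by
      rw [hτ, hd'.cycleType_mul, Multiset.card_add, hc'cyc.cycleType]; simp
    have hle : g.support.card + c.support.card + 1 ≤ Fintype.card α := by
      rw [← h2]; exact Finset.card_le_univ _
    simp only [ccount, h1, h2, h3, h4]
    omega

theorem card_subtype_ne' (i : α) : Fintype.card {x : α // x ≠ i} = Fintype.card α - 1 := by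
  have := Fintype.card_subtype_compl (fun x : α => x = i)
  simpa [Fintype.card_subtype_eq] using this

theorem ccount_ofSubtype {i : α} (g : Perm {x : α // x ≠ i}) :
    ccount (ofSubtype g) = ccount g + 1 := by
  have hct : (ofSubtype g).cycleType = g.cycleType := cycleType_ofSubtype
  have hs : (ofSubtype g).support.card = g.support.card := by
    rw [← sum_cycleType, ← sum_cycleType, hct]
  have hcard : Fintype.card {x : α // x ≠ i} + 1 = Fintype.card α := by
    rw [card_subtype_ne']
    have : 0 < Fintype.card α := Fintype.card_pos_iff.mpr ⟨i⟩
    omega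
  have hle : g.support.card ≤ Fintype.card {x : α // x ≠ i} := Finset.card_le_univ _
  simp only [ccount, hct, hs]
  omega

theorem sum_fix_eq (θ : ℝ) (i : α) :
    ∑ σ ∈ univ.filter (fun σ : Perm α => σ i = i), θ ^ ccount σ
      = θ * ∑ g : Perm {x : α // x ≠ i}, θ ^ ccount g := by
  rw [Finset.mul_sum]
  have key : ∀ σ : Perm α, σ i = i → ∀ x : α, x ≠ i ↔ σ x ≠ i := by
    intro σ hσ x
    constructor
    · intro hx h
      exact hx (σ.injective (h.trans hσ.symm))
    · intro hx h
      subst h; exact hx hσ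
  apply Finset.sum_bij
    (fun (σ : Perm α) (hσ : σ ∈ univ.filter (fun σ : Perm α => σ i = i)) =>
      σ.subtypePerm (fun x => (key σ (Finset.mem_filter.mp hσ).2 x).symm))
  · intro σ _
    exact Finset.mem_univ _
  · intro σ hσ σ' hσ' h
    have h1 := congrArg ofSubtype h
    have e1 : ofSubtype (σ.subtypePerm (fun x => (key σ (Finset.mem_filter.mp hσ).2 x).symm)) = σ :=
      ofSubtype_subtypePerm (p := fun x : α => x ≠ i) _ (fun x hx hxi => hx (by
        rw [hxi]; exact (Finset.mem_filter.mp hσ).2))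
    have e2 : ofSubtype (σ'.subtypePerm (fun x => (key σ' (Finset.mem_filter.mp hσ').2 x).symm)) = σ' :=
      ofSubtype_subtypePerm (p := fun x : α => x ≠ i) _ (fun x hx hxi => hx (by
        rw [hxi]; exact (Finset.mem_filter.mp hσ').2))
    rwa [e1, e2] at h1
  · intro g _
    refine ⟨ofSubtype g, ?_, ?_⟩
    · simp only [Finset.mem_filter, Finset.mem_univ, true_and]
      exact ofSubtype_apply_of_not_mem g (by simp)
    · exact subtypePerm_ofSubtype g
  · intro σ hσ
    have hσi := (Finset.mem_filter.mp hσ).2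
    have hofs : ofSubtype (σ.subtypePerm (fun x => (key σ hσi x).symm)) = σ :=
      ofSubtype_subtypePerm (p := fun x : α => x ≠ i) _ (fun x hx hxi => hx (by rw [hxi]; exact hσi))
    have := ccount_ofSubtype (σ.subtypePerm (fun x => (key σ hσi x).symm))
    rw [hofs] at this
    rw [this, pow_succ, mul_comm]

theorem sum_fix_eq_sum_move (θ : ℝ) {i j : α} (hij : j ≠ i) :
    ∑ σ ∈ univ.filter (fun σ : Perm α => σ i = i), θ ^ ccount σ
      = θ * ∑ τ ∈ univ.filter (fun τ : Perm α => τ i = j), θ ^ ccount τ := by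
  rw [Finset.mul_sum]
  apply Finset.sum_bij (fun (σ : Perm α) _ => swap i j * σ)
  · intro σ hσ
    rw [Finset.mem_filter] at hσ ⊢
    refine ⟨Finset.mem_univ _, ?_⟩
    rw [Equiv.Perm.mul_apply, hσ.2, swap_apply_left]
  · intro σ _ σ' _ h
    exact mul_left_cancel h
  · intro τ hτ
    rw [Finset.mem_filter] at hτ
    refine ⟨swap i j * τ, ?_, ?_⟩
    · rw [Finset.mem_filter]
      refine ⟨Finset.mem_univ _, ?_⟩
      rw [Equiv.Perm.mul_apply, hτ.2, swap_apply_right]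
    · rw [← mul_assoc, Equiv.swap_mul_self, one_mul]
  · intro σ hσ
    rw [Finset.mem_filter] at hσ
    rw [ccount_swap_mul hij.symm hσ.2, pow_succ, mul_comm]

theorem total_sum (θ : ℝ) (hθ : θ ≠ 0) (n : ℕ) :
    ∀ (α : Type) [Fintype α] [DecidableEq α], Fintype.card α = n →
      (∑ σ : Perm α, θ ^ ccount σ) = ∏ k ∈ Finset.range n, (θ + k) := by
  induction n with
  | zero =>
    intro α _ _ h
    haveI : IsEmpty α := Fintype.card_eq_zero_iff.mp h
    have huniv : (univ : Finset (Perm α)) = {1} :=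
      Finset.eq_singleton_iff_unique_mem.mpr
        ⟨Finset.mem_univ 1, fun σ _ => Equiv.ext fun x => isEmptyElim x⟩
    rw [huniv]
    simp [ccount, h]
  | succ n ih =>
    intro α _ _ h
    have hpos : 0 < Fintype.card α := by omega
    obtain ⟨i⟩ := Fintype.card_pos_iff.mp hpos
    have hcardsub : Fintype.card {x : α // x ≠ i} = n := by
      rw [card_subtype_ne']; omega
    have hT' := ih {x : α // x ≠ i} hcardsub
    have hfiber : ∑ σ : Perm α, θ ^ ccount σ
        = ∑ j : α, ∑ σ ∈ univ.filter (fun σ : Perm α => σ i = j), θ ^ ccount σ :=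
      (Finset.sum_fiberwise_of_maps_to (fun σ _ => Finset.mem_univ (σ i)) _).symm
    have hSi : ∑ σ ∈ univ.filter (fun σ : Perm α => σ i = i), θ ^ ccount σ
        = θ * ∑ g : Perm {x : α // x ≠ i}, θ ^ ccount g := sum_fix_eq θ i
    have hSj : ∀ j, j ≠ i →
        ∑ σ ∈ univ.filter (fun σ : Perm α => σ i = j), θ ^ ccount σ
          = ∑ g : Perm {x : α // x ≠ i}, θ ^ ccount g := by
      intro j hj
      exact mul_left_cancel₀ hθ ((sum_fix_eq_sum_move θ hj).symm.trans hSi)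
    rw [hfiber, ← Finset.add_sum_erase _ _ (Finset.mem_univ i), hSi,
      Finset.sum_congr rfl (fun j hj => hSj j (Finset.ne_of_mem_erase hj)),
      Finset.sum_const, Finset.card_erase_of_mem (Finset.mem_univ i), Finset.card_univ, h,
      Finset.prod_range_succ, hT', nsmul_eq_mul]
    push_cast
    ring

theorem cycleCount_eq_ccount {m : ℕ} (σ : Perm (Fin m)) : cycleCount σ = ccount σ := by
  simp [cycleCount, ccount]

theorem entry_eq {m : ℕ} (σ : Perm (Fin m)) (K : Matrix (Fin m) (Fin m) ℂ) (i : Fin m) :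
    (permMat σ * K * (permMat σ)ᴴ) i i = K (σ i) (σ i) := by
  simp [permMat, Matrix.mul_apply, Matrix.conjTranspose_apply, apply_ite, ite_mul, mul_ite,
    Finset.sum_ite_eq, Finset.sum_ite_eq']

end EwensAux

theorem stmt_5 {m : ℕ} (θ : ℝ) (hθ : 0 < θ) (K : Matrix (Fin m) (Fin m) ℂ) (i : Fin m) :
    (∑ σ : Equiv.Perm (Fin m), ewens θ σ • (permMat σ * K * (permMat σ)ᴴ)) i i
      = (((θ - 1) / (θ + m - 1) : ℝ) : ℂ) * K i i
        + ((1 / (θ + m - 1) : ℝ) : ℂ) * K.trace := by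
  classical
  open EwensAux Finset in
  have hm : 1 ≤ m := Nat.one_le_iff_ne_zero.mpr (by rintro rfl; exact i.elim0)
  set T' : ℝ := ∏ k ∈ Finset.range (m - 1), (θ + k) with hT'def
  set C : ℝ := ∏ k ∈ Finset.range m, (θ + k) with hCdef
  have hT'pos : 0 < T' := Finset.prod_pos fun k _ => by positivity
  have hcastm : ((m - 1 : ℕ) : ℝ) = (m : ℝ) - 1 := by
    rw [Nat.cast_sub hm, Nat.cast_one]
  have hDpos : 0 < θ + (m : ℝ) - 1 := by
    have : (1 : ℝ) ≤ (m : ℝ) := by exact_mod_cast hm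
    linarith
  have hC : C = T' * (θ + (m : ℝ) - 1) := by
    obtain ⟨n, hn⟩ : ∃ n, m = n + 1 := ⟨m - 1, by omega⟩
    subst hn
    simp only [hCdef, hT'def, Nat.add_sub_cancel, Finset.prod_range_succ]
    push_cast
    ring
  have hCpos : 0 < C := by rw [hC]; exact mul_pos hT'pos hDpos
  have hcardsub : Fintype.card {x : Fin m // x ≠ i} = m - 1 := by
    rw [card_subtype_ne', Fintype.card_fin]
  have hT'sum : (∑ g : Equiv.Perm {x : Fin m // x ≠ i}, θ ^ ccount g) = T' :=
    total_sum θ (ne_of_gt hθ) (m - 1) _ hcardsub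
  have hSi : ∑ σ ∈ univ.filter (fun σ : Equiv.Perm (Fin m) => σ i = i), θ ^ ccount σ
      = θ * T' := by rw [sum_fix_eq θ i, hT'sum]
  have hSj : ∀ j, j ≠ i →
      ∑ σ ∈ univ.filter (fun σ : Equiv.Perm (Fin m) => σ i = j), θ ^ ccount σ = T' := by
    intro j hj
    exact mul_left_cancel₀ (ne_of_gt hθ) ((sum_fix_eq_sum_move θ hj).symm.trans hSi)
  have hP : ∀ j, ∑ σ ∈ univ.filter (fun σ : Equiv.Perm (Fin m) => σ i = j), ewens θ σ
      = if j = i then θ / (θ + (m : ℝ) - 1) else 1 / (θ + (m : ℝ) - 1) := by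
    intro j
    have : ∑ σ ∈ univ.filter (fun σ : Equiv.Perm (Fin m) => σ i = j), ewens θ σ
        = (∑ σ ∈ univ.filter (fun σ : Equiv.Perm (Fin m) => σ i = j), θ ^ ccount σ) / C := by
      rw [Finset.sum_div]
      refine Finset.sum_congr rfl fun σ _ => ?_
      rw [ewens, cycleCount_eq_ccount]
    rw [this]
    by_cases hj : j = i
    · subst hj
      rw [if_pos rfl, hSi, hC]
      field_simp
    · rw [if_neg hj, hSj j hj, hC]
      field_simp
  -- compute the matrix entry
  have hentry : (∑ σ : Equiv.Perm (Fin m), ewens θ σ • (permMat σ * K * (permMat σ)ᴴ)) i i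
      = ∑ σ : Equiv.Perm (Fin m), ((ewens θ σ : ℝ) : ℂ) * K (σ i) (σ i) := by
    rw [Matrix.sum_apply]
    refine Finset.sum_congr rfl fun σ _ => ?_
    rw [Matrix.smul_apply, entry_eq, Complex.real_smul]
  rw [hentry]
  rw [← Finset.sum_fiberwise_of_maps_to (fun (σ : Equiv.Perm (Fin m)) _ => Finset.mem_univ (σ i))
    (fun σ => ((ewens θ σ : ℝ) : ℂ) * K (σ i) (σ i))]
  have hinner : ∀ j : Fin m,
      ∑ σ ∈ univ.filter (fun σ : Equiv.Perm (Fin m) => σ i = j),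
        ((ewens θ σ : ℝ) : ℂ) * K (σ i) (σ i)
      = ((if j = i then θ / (θ + (m : ℝ) - 1) else 1 / (θ + (m : ℝ) - 1) : ℝ) : ℂ) * K j j := by
    intro j
    rw [← hP j]
    push_cast
    rw [Finset.sum_mul]
    refine Finset.sum_congr rfl fun σ hσ => ?_
    rw [(Finset.mem_filter.mp hσ).2]
  rw [Finset.sum_congr rfl fun j _ => hinner j]
  have hsplit : ∀ j : Fin m,
      ((if j = i then θ / (θ + (m : ℝ) - 1) else 1 / (θ + (m : ℝ) - 1) : ℝ) : ℂ) * K j j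
      = ((1 / (θ + (m : ℝ) - 1) : ℝ) : ℂ) * K j j
        + (if j = i then (((θ - 1) / (θ + (m : ℝ) - 1) : ℝ) : ℂ) * K j j else 0) := by
    intro j
    by_cases hj : j = i
    · subst hj
      rw [if_pos rfl, if_pos rfl, ← add_mul, ← Complex.ofReal_add]
      congr 2
      field_simp
      ring
    · rw [if_neg hj, if_neg hj, add_zero]
  rw [Finset.sum_congr rfl fun j _ => hsplit j, Finset.sum_add_distrib,
    Finset.sum_ite_eq' univ i, if_pos (Finset.mem_univ i)]
  rw [Matrix.trace]
  simp only [Matrix.diag]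
  rw [Finset.mul_sum]
  ring
end

section
/- Let K = (a_{ij}) be an m×m complex matrix (m ≥ 2) and let K_θ = E[M_σ K M_σ^*] with σ Ewens-distributed with parameter θ > 0. Then for i ≠ j, (K_θ)_{ij} = [ (θ²−1) a_{ij} + (θ−1) a_{ji} + (θ−1) Σ_{k ≠ i,j} (a_{ik} + a_{kj}) + Σ_{l ≠ k} a_{lk} ] / ((θ+m−2)(θ+m−1)). -/
open Matrix

open Equiv Equiv.Perm Finset

set_option linter.unusedSectionVars false

variable {α : Type*} [Fintype α] [DecidableEq α]

/-- Number of cycles including fixed points. -/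
def pcyc (σ : Perm α) : ℕ := (Fintype.card α - σ.support.card) + σ.cycleType.card

lemma pcyc_one : pcyc (1 : Perm α) = Fintype.card α := by
  simp [pcyc]

/-- An involutive cycle is a swap of `x` and `f x`. -/
lemma isCycle_eq_swap {f : Perm α} (hf : f.IsCycle) {x : α} (hx : f x ≠ x)
    (h2 : f (f x) = x) : f = Equiv.swap x (f x) := by
  have hsq : f ^ 2 = 1 := by
    ext y
    by_cases hy : f y = y
    · simp [pow_two, hy]
    · obtain ⟨i, hi⟩ := hf.exists_zpow_eq hx hy
      have hc : f ^ (2 : ℕ) * f ^ i = f ^ i * f ^ (2 : ℕ) := by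
        rw [← zpow_natCast f 2, ← _root_.zpow_add, ← _root_.zpow_add, add_comm]
      have hx2 : (f ^ 2) x = x := by simp [pow_two, h2]
      calc (f ^ 2) y = (f ^ 2) ((f ^ i) x) := by rw [hi]
        _ = (f ^ i) ((f ^ 2) x) := by rw [← Equiv.Perm.mul_apply, ← Equiv.Perm.mul_apply, hc]
        _ = y := by rw [hx2, hi]
  have hne : f ≠ 1 := by
    intro h; rw [h] at hx; simp at hx
  have hord : orderOf f = 2 := by
    rcases (Nat.dvd_prime Nat.prime_two).mp (orderOf_dvd_of_pow_eq_one hsq) with h | h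
    · exact absurd (orderOf_eq_one_iff.mp h) hne
    · exact h
  have hcard : #f.support = 2 := by rw [← hf.orderOf, hord]
  obtain ⟨a, b, hab, rfl⟩ := card_support_eq_two.mp hcard
  rcases eq_or_ne x a with rfl | hxa
  · rw [swap_apply_left]
  · rcases eq_or_ne x b with rfl | hxb
    · rw [swap_apply_right, Equiv.swap_comm]
    · exact absurd (swap_apply_of_ne_of_ne hxa hxb) hx

lemma pcyc_swap_mul {σ : Perm α} {x : α} (hx : σ x ≠ x) :
    pcyc (Equiv.swap x (σ x) * σ) = pcyc σ + 1 := by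
  have hxs : x ≠ σ x := Ne.symm hx
  set τ := Equiv.swap x (σ x) * σ with hτ
  by_cases h2 : σ (σ x) = x
  · -- x lies in a 2-cycle of σ
    have hστ : σ = Equiv.swap x (σ x) * τ := by
      rw [hτ, ← mul_assoc, Equiv.swap_mul_self, one_mul]
    have hτx : τ x = x := by simp [hτ, Equiv.Perm.mul_apply, h2, swap_apply_right]
    have hτσx : τ (σ x) = σ x := by simp [hτ, Equiv.Perm.mul_apply, h2, swap_apply_left]
    have hdisj : Disjoint (Equiv.swap x (σ x)) τ := by
      rw [disjoint_iff_disjoint_support, support_swap hxs]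
      rw [Finset.disjoint_left]
      intro z hz hzτ
      rw [mem_support] at hzτ
      rcases Finset.mem_insert.mp hz with rfl | hz
      · exact hzτ hτx
      · rw [Finset.mem_singleton] at hz; subst hz; exact hzτ hτσx
    have hct := Equiv.Perm.Disjoint.cycleType_mul hdisj
    rw [← hστ] at hct
    have hsup := hdisj.card_support_mul
    rw [← hστ] at hsup
    have hswt : (Equiv.swap x (σ x)).cycleType = {2} := by
      rw [(isCycle_swap hxs).cycleType, card_support_swap hxs]
    have hsws : #(Equiv.swap x (σ x)).support = 2 := card_support_swap hxs
    have hle : #σ.support ≤ Fintype.card α := Finset.card_le_univ _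
    have h1 : Multiset.card σ.cycleType = Multiset.card τ.cycleType + 1 := by
      rw [hct, hswt]; simp [add_comm]
    rw [pcyc, pcyc, h1]
    rw [hswt] at hct
    omega
  · -- the cycle of x has length ≥ 3
    set c := σ.cycleOf x with hcdef
    have hc : c.IsCycle := isCycle_cycleOf σ hx
    have hcf : c ∈ σ.cycleFactorsFinset := cycleOf_mem_cycleFactorsFinset_iff.mpr (mem_support.mpr hx)
    have hcx : c x = σ x := cycleOf_apply_self σ x
    have hccx : c (c x) ≠ x := by
      rw [hcx]
      rw [cycleOf_apply_apply_self σ x]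
      exact h2
    have hcxx : c x ≠ x := by rw [hcx]; exact hx
    set d := σ * c⁻¹ with hddef
    have hd : Disjoint d c := disjoint_mul_inv_of_mem_cycleFactorsFinset hcf
    have hσdc : σ = d * c := by rw [hddef, inv_mul_cancel_right]
    have hcxsup : c x ∈ c.support := by
      rw [apply_mem_support]; exact mem_support.mpr hcxx
    have hccx' : c (c x) ≠ c x := fun h => hcxx (c.injective h)
    set c' := Equiv.swap x (c x) * c with hc'def
    have hc'cx : c' (c x) = c (c x) := by
      rw [hc'def, Equiv.Perm.mul_apply, swap_apply_of_ne_of_ne hccx hccx']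
    have hc' : c'.IsCycle := hc.swap_mul hcxx hccx
    have hc'sup : c'.support = c.support \ {x} := support_swap_mul_eq c x hccx
    have hswap_supp : (Equiv.swap x (c x)).support ⊆ c.support := by
      rw [support_swap (Ne.symm hcxx)]
      intro z hz
      rcases Finset.mem_insert.mp hz with rfl | hz
      · exact mem_support.mpr hcxx
      · rw [Finset.mem_singleton] at hz; subst hz; exact hcxsup
    have hdsw : Disjoint d (Equiv.swap x (c x)) := by
      rw [disjoint_iff_disjoint_support]
      exact Finset.disjoint_of_subset_right hswap_supp
        (disjoint_iff_disjoint_support.mp hd)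
    have hτdc' : τ = d * c' := by
      rw [hτ, hc'def, ← hcx, hσdc, ← mul_assoc, ← (hdsw.commute.eq), hcx, mul_assoc]
    have hdc' : Disjoint d c' := by
      rw [disjoint_iff_disjoint_support, hc'sup]
      exact Finset.disjoint_of_subset_right (Finset.sdiff_subset)
        (disjoint_iff_disjoint_support.mp hd)
    have hctσ : σ.cycleType = d.cycleType + {#c.support} := by
      rw [hσdc, Equiv.Perm.Disjoint.cycleType_mul hd, hc.cycleType]
    have hctτ : τ.cycleType = d.cycleType + {#c'.support} := by
      rw [hτdc', Equiv.Perm.Disjoint.cycleType_mul hdc', hc'.cycleType]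
    have hsσ : #σ.support = #d.support + #c.support := by
      rw [hσdc]; exact hd.card_support_mul
    have hsτ : #τ.support = #d.support + #c'.support := by
      rw [hτdc']; exact hdc'.card_support_mul
    have hsc' : #c'.support = #c.support - 1 := by
      rw [hc'sup, Finset.card_sdiff_of_subset (by simpa using mem_support.mpr hcxx)]
      simp
    have hsc2 : 2 ≤ #c.support := hc.two_le_card_support
    have hle : #σ.support ≤ Fintype.card α := Finset.card_le_univ _
    have ht : Multiset.card τ.cycleType = Multiset.card σ.cycleType := by
      rw [hctσ, hctτ]; simp
    rw [pcyc, pcyc, ht]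
    omega

/-- `α` is equivalent to the non-`none` elements of `Option α`. -/
def someEquiv (α : Type*) : α ≃ {x : Option α // x ≠ none} where
  toFun a := ⟨some a, by simp⟩
  invFun x := Option.get x.1 (Option.ne_none_iff_isSome.mp x.2)
  left_inv a := rfl
  right_inv x := by
    rcases x with ⟨o, ho⟩
    cases o with
    | none => exact absurd rfl ho
    | some a => rfl

lemma optionCongr_eq_extendDomain (e : Perm α) :
    e.optionCongr = e.extendDomain (someEquiv α) := by
  apply Equiv.ext
  intro o
  cases o with
  | none =>
      rw [Equiv.Perm.extendDomain_apply_not_subtype]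
      · rfl
      · simp
  | some a =>
      rw [Equiv.Perm.extendDomain_apply_subtype (b := some a) _ _ (by simp)]
      rfl

lemma pcyc_optionCongr (e : Perm α) : pcyc (e.optionCongr : Perm (Option α)) = pcyc e + 1 := by
  have hle : #e.support ≤ Fintype.card α := Finset.card_le_univ _
  rw [pcyc, pcyc, optionCongr_eq_extendDomain, Equiv.Perm.cycleType_extendDomain,
    Equiv.Perm.card_support_extend_domain, Fintype.card_option]
  omega

lemma pcyc_permCongr {β : Type*} [Fintype β] [DecidableEq β] (f : α ≃ β) (σ : Perm α) :
    pcyc (f.permCongr σ) = pcyc σ := by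
  have key : f.permCongr σ
      = σ.extendDomain (f.trans (Equiv.subtypeUnivEquiv (fun _ : β => trivial)).symm) := by
    ext b
    rw [Equiv.Perm.extendDomain_apply_subtype _ _ (trivial : (fun _ : β => True) b)]
    simp [Equiv.subtypeUnivEquiv]
  have hle : #σ.support ≤ Fintype.card α := Finset.card_le_univ _
  rw [pcyc, pcyc, key, Equiv.Perm.cycleType_extendDomain,
    Equiv.Perm.card_support_extend_domain, Fintype.card_congr f]

lemma pcyc_decomposeOption (p : Option α) (e : Perm α) :
    pcyc (Equiv.Perm.decomposeOption.symm (p, e)) = pcyc e + if p = none then 1 else 0 := by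
  rw [Equiv.Perm.decomposeOption_symm_apply]
  rcases p with _ | q
  · rw [if_pos rfl, Equiv.swap_self]
    have : (Equiv.refl (Option α)) * e.optionCongr = e.optionCongr := one_mul _
    rw [this, pcyc_optionCongr]
  · rw [if_neg (by simp)]
    set g : Perm (Option α) := e.optionCongr with hg
    set τ : Perm (Option α) := Equiv.swap none (some q) * g with hτ
    have hτn : τ none = some q := by
      rw [hτ, Equiv.Perm.mul_apply]
      have : g none = none := rfl
      rw [this, swap_apply_left]
    have hx : τ none ≠ none := by rw [hτn]; simp
    have := pcyc_swap_mul hx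
    rw [hτn] at this
    have hgτ : Equiv.swap none (some q) * τ = g := by
      rw [hτ, ← mul_assoc, Equiv.swap_mul_self, one_mul]
    rw [hgτ, pcyc_optionCongr] at this
    omega

/-- `Option {y // y ≠ x} ≃ α`, sending `none` to `x`. -/
def eOpt (x : α) : Option {y : α // y ≠ x} ≃ α where
  toFun o := o.elim x Subtype.val
  invFun a := if h : a = x then none else some ⟨a, h⟩
  left_inv o := by
    cases o with
    | none => simp
    | some y => simp [y.2]
  right_inv a := by by_cases h : a = x <;> simp [h]

@[simp] lemma eOpt_none (x : α) : eOpt x none = x := rfl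
@[simp] lemma eOpt_some (x : α) (y : {y : α // y ≠ x}) : eOpt x (some y) = y := rfl
@[simp] lemma eOpt_symm_self (x : α) : (eOpt x).symm x = none := by simp [eOpt]
lemma eOpt_symm_ne (x : α) {a : α} (h : a ≠ x) : (eOpt x).symm a = some ⟨a, h⟩ := by
  simp [eOpt, h]

/-- Insert a value for `x` into a permutation of the rest. -/
def insEquiv (x : α) : (Option {y : α // y ≠ x} × Perm {y : α // y ≠ x}) ≃ Perm α :=
  Equiv.Perm.decomposeOption.symm.trans (eOpt x).permCongr

lemma pcyc_insEquiv (x : α) (p : Option {y : α // y ≠ x}) (e : Perm {y : α // y ≠ x}) :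
    pcyc (insEquiv x (p, e)) = pcyc e + if p = none then 1 else 0 := by
  rw [show insEquiv x (p, e) = (eOpt x).permCongr (Equiv.Perm.decomposeOption.symm (p, e))
      from rfl,
    pcyc_permCongr, pcyc_decomposeOption]

lemma insEquiv_apply (x : α) (p : Option {y : α // y ≠ x}) (e : Perm {y : α // y ≠ x}) (y : α) :
    insEquiv x (p, e) y
      = eOpt x (Equiv.swap none p (Option.map e ((eOpt x).symm y))) := by
  show (eOpt x).permCongr (Equiv.Perm.decomposeOption.symm (p, e)) y = _
  rw [Equiv.permCongr_apply, Equiv.Perm.decomposeOption_symm_apply, Equiv.Perm.mul_apply,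
    Equiv.optionCongr_apply]

lemma insEquiv_apply_self (x : α) (p : Option {y : α // y ≠ x}) (e : Perm {y : α // y ≠ x}) :
    insEquiv x (p, e) x = eOpt x p := by
  rw [insEquiv_apply, eOpt_symm_self]
  simp

lemma insEquiv_apply_ne (x : α) (p : Option {y : α // y ≠ x}) (e : Perm {y : α // y ≠ x})
    {j : α} (hj : j ≠ x) :
    insEquiv x (p, e) j = eOpt x (Equiv.swap none p (some (e ⟨j, hj⟩))) := by
  rw [insEquiv_apply, eOpt_symm_ne x hj]
  rfl

universe u

/-- Total sum of `θ` to the number of cycles. -/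
lemma sum_pcyc (θ : ℝ) : ∀ (n : ℕ) (α : Type u) [Fintype α] [DecidableEq α],
    Fintype.card α = n →
    ∑ σ : Perm α, θ ^ pcyc σ = ∏ k ∈ Finset.range n, (θ + k) := by
  intro n
  induction n with
  | zero =>
      intro α _ _ h
      have he : IsEmpty α := Fintype.card_eq_zero_iff.mp h
      have h1 : ∀ σ : Perm α, σ = 1 := fun σ => Equiv.ext (fun y => he.elim y)
      calc ∑ σ : Perm α, θ ^ pcyc σ = ∑ _σ : Perm α, 1 := by
            refine Finset.sum_congr rfl (fun σ _ => ?_)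
            rw [h1 σ, pcyc_one, h, pow_zero]
        _ = 1 := by simp [Finset.card_univ, Fintype.card_perm, h]
        _ = _ := by simp
  | succ n ih =>
      intro α _ _ h
      have hne : Nonempty α := Fintype.card_pos_iff.mp (by omega)
      obtain ⟨x⟩ := hne
      have hcard : Fintype.card {y : α // y ≠ x} = n := by
        have := Fintype.card_subtype_compl (fun y : α => y = x)
        simp only [Fintype.card_subtype_eq] at this
        have h2 : Fintype.card {y : α // y ≠ x} = Fintype.card α - 1 := this
        omega
      calc ∑ σ : Perm α, θ ^ pcyc σ
          = ∑ z : Option {y : α // y ≠ x} × Perm {y : α // y ≠ x},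
              θ ^ pcyc (insEquiv x z) := (Equiv.sum_comp (insEquiv x) _).symm
        _ = ∑ z : Option {y : α // y ≠ x} × Perm {y : α // y ≠ x},
              (if z.1 = none then θ else 1) * θ ^ pcyc z.2 := by
            refine Finset.sum_congr rfl (fun z _ => ?_)
            rw [show z = (z.1, z.2) from rfl, pcyc_insEquiv, pow_add]
            split_ifs <;> ring
        _ = (∑ p : Option {y : α // y ≠ x}, if p = none then θ else 1)
              * ∑ e : Perm {y : α // y ≠ x}, θ ^ pcyc e := by
            rw [Fintype.sum_prod_type, Finset.sum_mul_sum]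
        _ = (θ + n) * ∏ k ∈ Finset.range n, (θ + k) := by
            rw [ih _ hcard]
            congr 1
            rw [Fintype.sum_option]
            simp [hcard]
        _ = _ := by rw [Finset.prod_range_succ]; ring

lemma card_ne_eq (x : α) : Fintype.card {y : α // y ≠ x} = Fintype.card α - 1 := by
  have := Fintype.card_subtype_compl (fun y : α => y = x)
  simp only [Fintype.card_subtype_eq] at this
  exact this

lemma sum_cond_one (θ : ℝ) (x a : α) :
    ∑ σ : Perm α, (if σ x = a then θ ^ pcyc σ else 0)
      = (if a = x then θ else 1) * ∏ k ∈ Finset.range (Fintype.card α - 1), (θ + k) := by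
  classical
  set q := (eOpt x).symm a with hq
  have hqa : eOpt x q = a := Equiv.apply_symm_apply _ _
  have hqiff : (q = none) ↔ (a = x) := by
    rw [hq, Equiv.symm_apply_eq, eOpt_none]
  calc ∑ σ : Perm α, (if σ x = a then θ ^ pcyc σ else 0)
      = ∑ z : Option {y : α // y ≠ x} × Perm {y : α // y ≠ x},
          (if insEquiv x z x = a then θ ^ pcyc (insEquiv x z) else 0) :=
        (Equiv.sum_comp (insEquiv x) _).symm
    _ = ∑ p : Option {y : α // y ≠ x}, ∑ e : Perm {y : α // y ≠ x},
          (if p = q then (if q = none then θ else 1) * θ ^ pcyc e else 0) := by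
        rw [Fintype.sum_prod_type]
        refine Finset.sum_congr rfl (fun p _ => Finset.sum_congr rfl (fun e _ => ?_))
        rw [insEquiv_apply_self, pcyc_insEquiv]
        by_cases hp : p = q
        · subst hp
          rw [if_pos hqa, if_pos rfl, pow_add]
          split_ifs <;> ring
        · rw [if_neg (fun h => hp (by rw [hq, ← h, Equiv.symm_apply_apply])), if_neg hp]
    _ = ∑ p : Option {y : α // y ≠ x},
          (if p = q then (if q = none then θ else 1) * ∑ e : Perm {y : α // y ≠ x}, θ ^ pcyc e
           else 0) := by
        refine Finset.sum_congr rfl (fun p _ => ?_)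
        by_cases hp : p = q <;> simp [hp, Finset.mul_sum]
    _ = (if q = none then θ else 1) * ∑ e : Perm {y : α // y ≠ x}, θ ^ pcyc e := by
        rw [Finset.sum_ite_eq' Finset.univ q]
        simp
    _ = _ := by
        rw [sum_pcyc θ _ _ (by rw [card_ne_eq])]
        congr 1
        simp [hqiff]

lemma sum_cond_two (θ : ℝ) {x j a b : α} (hjx : j ≠ x) (hab : a ≠ b) :
    ∑ σ : Perm α, (if σ x = a ∧ σ j = b then θ ^ pcyc σ else 0)
      = ((if a = x then θ else 1) * (if b = j then θ else 1) *
         (if a = j ∧ b = x then θ else 1))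
        * ∏ k ∈ Finset.range (Fintype.card α - 2), (θ + k) := by
  classical
  set q := (eOpt x).symm a with hq
  have hqa : eOpt x q = a := Equiv.apply_symm_apply _ _
  set j' : {y : α // y ≠ x} := ⟨j, hjx⟩ with hj'
  obtain ⟨c', hc'⟩ : ∃ c' : {y : α // y ≠ x},
      Equiv.swap none q ((eOpt x).symm b) = some c' := by
    by_cases hax : a = x
    · have hbx : b ≠ x := fun h => hab (hax.trans h.symm)
      refine ⟨⟨b, hbx⟩, ?_⟩
      rw [hq, hax, eOpt_symm_self, Equiv.swap_self, eOpt_symm_ne x hbx]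
      rfl
    · rw [hq, eOpt_symm_ne x hax]
      by_cases hbx : b = x
      · refine ⟨⟨a, hax⟩, ?_⟩
        rw [hbx, eOpt_symm_self, Equiv.swap_apply_left]
      · refine ⟨⟨b, hbx⟩, ?_⟩
        rw [eOpt_symm_ne x hbx]
        refine Equiv.swap_apply_of_ne_of_ne (by simp) ?_
        simp only [Ne, Option.some.injEq, Subtype.mk.injEq]
        exact fun h => hab h.symm
  have ht : ∀ e : Perm {y : α // y ≠ x}, (insEquiv x (q, e) j = b ↔ e j' = c') := by
    intro e
    rw [insEquiv_apply_ne x q e hjx, ← hj', Equiv.apply_eq_iff_eq_symm_apply]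
    constructor
    · intro h
      have h2 : some (e j') = some c' := by rw [← hc', ← h, Equiv.swap_apply_self]
      exact Option.some_injective _ h2
    · intro h
      rw [← Equiv.swap_apply_self none q ((eOpt x).symm b), hc', ← h]
  have hcoef : (if q = none then θ else 1) * (if c' = j' then θ else 1)
      = (if a = x then θ else 1) * (if b = j then θ else 1) *
        (if a = j ∧ b = x then θ else 1) := by
    by_cases hax : a = x
    · have hbx : b ≠ x := fun h => hab (hax.trans h.symm)
      have hqn : q = none := by rw [hq, hax, eOpt_symm_self]
      have hcb : c' = ⟨b, hbx⟩ := by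
        have h0 := hc'
        rw [hqn, Equiv.swap_self, Equiv.refl_apply, eOpt_symm_ne x hbx] at h0
        exact (Option.some_injective _ h0).symm
      have hnaj : ¬(a = j ∧ b = x) := fun h => hbx h.2
      rw [if_pos hqn, if_pos hax, if_neg hnaj, hcb, hj']
      simp only [Subtype.mk.injEq]
      ring
    · have hqs : q = some ⟨a, hax⟩ := by rw [hq, eOpt_symm_ne x hax]
      by_cases hbx : b = x
      · have hca : c' = ⟨a, hax⟩ := by
          have h0 := hc'
          rw [hqs, hbx, eOpt_symm_self, Equiv.swap_apply_left] at h0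
          exact (Option.some_injective _ h0).symm
        have hbj : b ≠ j := fun h => hjx (h.symm.trans hbx)
        have haj : (a = j ∧ b = x) ↔ (a = j) := and_iff_left hbx
        rw [if_neg (by simp [hqs]), if_neg hax, if_neg hbj, hca, hj',
          if_congr haj rfl rfl]
        simp only [Subtype.mk.injEq]
        ring
      · have hca : c' = ⟨b, hbx⟩ := by
          have h0 := hc'
          rw [hqs, eOpt_symm_ne x hbx, Equiv.swap_apply_of_ne_of_ne (by simp)
            (by simp only [Ne, Option.some.injEq, Subtype.mk.injEq]
                exact fun h => hab h.symm)] at h0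
          exact (Option.some_injective _ h0).symm
        have hnaj : ¬(a = j ∧ b = x) := fun h => hbx h.2
        rw [if_neg (by simp [hqs]), if_neg hax, if_neg hnaj, hca, hj']
        simp only [Subtype.mk.injEq]
        ring
  calc ∑ σ : Perm α, (if σ x = a ∧ σ j = b then θ ^ pcyc σ else 0)
      = ∑ p : Option {y : α // y ≠ x}, ∑ e : Perm {y : α // y ≠ x},
          (if p = q ∧ e j' = c' then (if q = none then θ else 1) * θ ^ pcyc e else 0) := by
        rw [← Equiv.sum_comp (insEquiv x)
          (fun σ => if σ x = a ∧ σ j = b then θ ^ pcyc σ else 0), Fintype.sum_prod_type]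
        refine Finset.sum_congr rfl fun p _ => Finset.sum_congr rfl fun e _ => ?_
        by_cases hp : p = q
        · have h1 : insEquiv x (p, e) x = a := by rw [insEquiv_apply_self, hp, hqa]
          rw [pcyc_insEquiv, pow_add, hp]
          have hcond : (insEquiv x (q, e) x = a ∧ insEquiv x (q, e) j = b)
              ↔ (q = q ∧ e j' = c') := by
            constructor
            · exact fun h => ⟨rfl, (ht e).mp h.2⟩
            · intro h
              refine ⟨?_, (ht e).mpr h.2⟩
              rw [insEquiv_apply_self, hqa]
          rw [if_congr hcond rfl rfl]
          by_cases h2 : e j' = c'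
          · rw [if_pos (show q = q ∧ e j' = c' from ⟨rfl, h2⟩),
              if_pos (show q = q ∧ e j' = c' from ⟨rfl, h2⟩)]
            by_cases hqn : q = none
            · rw [if_pos hqn, if_pos hqn]; ring
            · rw [if_neg hqn, if_neg hqn]; ring
          · rw [if_neg (fun hh => h2 hh.2), if_neg (fun hh => h2 hh.2)]
        · have h1 : insEquiv x (p, e) x ≠ a := by
            rw [insEquiv_apply_self]
            exact fun h => hp (by rw [hq, ← h, Equiv.symm_apply_apply])
          rw [if_neg (fun hh => h1 hh.1), if_neg (fun hh => hp hh.1)]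
    _ = ∑ p : Option {y : α // y ≠ x},
          (if p = q then ∑ e : Perm {y : α // y ≠ x},
            (if e j' = c' then (if q = none then θ else 1) * θ ^ pcyc e else 0) else 0) := by
        refine Finset.sum_congr rfl fun p _ => ?_
        by_cases hp : p = q <;> simp [hp]
    _ = ∑ e : Perm {y : α // y ≠ x},
          (if e j' = c' then (if q = none then θ else 1) * θ ^ pcyc e else 0) := by
        rw [Finset.sum_ite_eq' Finset.univ q]
        simp
    _ = (if q = none then θ else 1)
          * ∑ e : Perm {y : α // y ≠ x}, (if e j' = c' then θ ^ pcyc e else 0) := by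
        rw [Finset.mul_sum]
        refine Finset.sum_congr rfl fun e _ => ?_
        by_cases h : e j' = c' <;> simp [h]
    _ = (if q = none then θ else 1) * ((if c' = j' then θ else 1)
          * ∏ k ∈ Finset.range (Fintype.card {y : α // y ≠ x} - 1), (θ + k)) := by
        rw [sum_cond_one θ j' c']
    _ = _ := by
        have h1 : Fintype.card {y : α // y ≠ x} - 1 = Fintype.card α - 2 := by
          have := card_ne_eq x
          omega
        rw [h1, ← hcoef]
        ring

lemma cycleCount_eq {m : ℕ} (σ : Perm (Fin m)) : cycleCount σ = pcyc σ := by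
  rw [cycleCount, pcyc, Fintype.card_fin]

lemma permMat_entry {m : ℕ} (σ : Perm (Fin m)) (K : Matrix (Fin m) (Fin m) ℂ) (i j : Fin m) :
    (permMat σ * K * (permMat σ)ᴴ) i j = K (σ i) (σ j) := by
  rw [Matrix.mul_apply]
  have h1 : ∀ l, (permMat σ * K) i l = K (σ i) l := by
    intro l
    rw [Matrix.mul_apply]
    simp [permMat, ite_mul, zero_mul]
  calc ∑ l, (permMat σ * K) i l * (permMat σ)ᴴ l j
      = ∑ l, K (σ i) l * (if l = σ j then 1 else 0) := by
        refine Finset.sum_congr rfl fun l _ => ?_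
        rw [h1 l, Matrix.conjTranspose_apply]
        congr 1
        simp [permMat, apply_ite (starRingEnd ℂ)]
    _ = K (σ i) (σ j) := by simp

lemma ewens_cond_sum {m : ℕ} (hm : 2 ≤ m) {θ : ℝ} (hθ : 0 < θ) (i j : Fin m) (hij : i ≠ j)
    {q : Fin m × Fin m} (hq : q.1 ≠ q.2) :
    ∑ σ : Perm (Fin m), (if σ i = q.1 ∧ σ j = q.2 then ewens θ σ else 0)
      = ((if q.1 = i then θ else 1) * (if q.2 = j then θ else 1) *
         (if q.1 = j ∧ q.2 = i then θ else 1)) / ((θ + m - 2) * (θ + m - 1)) := by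
  classical
  have hji : j ≠ i := fun h => hij h.symm
  set n : ℕ := m - 2 with hn
  have hmn : m = n + 2 := by omega
  set Pn : ℝ := ∏ k ∈ Finset.range n, (θ + k) with hPn
  have hPn_pos : 0 < Pn := Finset.prod_pos (fun k _ => by positivity)
  have hd : (∏ k ∈ Finset.range m, (θ + (k : ℝ)))
      = Pn * ((θ + m - 2) * (θ + m - 1)) := by
    rw [hmn, Finset.prod_range_succ, Finset.prod_range_succ, hPn]
    push_cast
    ring
  set w3 : ℝ := (if q.1 = i then θ else 1) * (if q.2 = j then θ else 1) *
      (if q.1 = j ∧ q.2 = i then θ else 1) with hw3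
  calc ∑ σ : Perm (Fin m), (if σ i = q.1 ∧ σ j = q.2 then ewens θ σ else 0)
      = (∑ σ : Perm (Fin m), (if σ i = q.1 ∧ σ j = q.2 then θ ^ pcyc σ else 0))
          / ∏ k ∈ Finset.range m, (θ + (k : ℝ)) := by
        rw [Finset.sum_div]
        refine Finset.sum_congr rfl fun σ _ => ?_
        rw [ewens, cycleCount_eq]
        split_ifs
        · rfl
        · rw [zero_div]
    _ = (w3 * Pn) / ∏ k ∈ Finset.range m, (θ + (k : ℝ)) := by
        rw [sum_cond_two θ hji hq, Fintype.card_fin, hw3, hPn, hn]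
    _ = w3 / ((θ + m - 2) * (θ + m - 1)) := by
        rw [hd, mul_comm w3 Pn, mul_div_mul_left _ _ (ne_of_gt hPn_pos)]

lemma offDiag_weighted {m : ℕ} (θ : ℝ) (i j : Fin m) (hij : i ≠ j)
    (K : Matrix (Fin m) (Fin m) ℂ) :
    ∑ q ∈ Finset.univ.offDiag,
      (((if q.1 = i then θ else 1) * (if q.2 = j then θ else 1) *
        (if q.1 = j ∧ q.2 = i then θ else 1) : ℝ) : ℂ) * K q.1 q.2
    = ((θ ^ 2 - 1 : ℝ) : ℂ) * K i j + ((θ - 1 : ℝ) : ℂ) * K j i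
      + ((θ - 1 : ℝ) : ℂ) * ∑ k ∈ Finset.univ \ {i, j}, (K i k + K k j)
      + ∑ q ∈ Finset.univ.offDiag, K q.1 q.2 := by
  classical
  set w : Fin m × Fin m → ℂ := fun q =>
    (((if q.1 = i then θ else 1) * (if q.2 = j then θ else 1) *
      (if q.1 = j ∧ q.2 = i then θ else 1) : ℝ) : ℂ) with hw
  set s : Finset (Fin m) := Finset.univ \ {i, j} with hs
  have hks : ∀ k ∈ s, k ≠ i ∧ k ≠ j := by
    intro k hk
    rw [hs, Finset.mem_sdiff] at hk
    have := hk.2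
    simp only [Finset.mem_insert, Finset.mem_singleton] at this
    exact ⟨fun h => this (Or.inl h), fun h => this (Or.inr h)⟩
  set T : Finset (Fin m × Fin m) :=
    (({(i, j), (j, i)} : Finset (Fin m × Fin m)) ∪ s.image fun k => (i, k))
      ∪ s.image fun k => (k, j) with hT
  have step1 : ∑ q ∈ Finset.univ.offDiag, w q * K q.1 q.2
      = ∑ q ∈ Finset.univ.offDiag, (w q - 1) * K q.1 q.2
        + ∑ q ∈ Finset.univ.offDiag, K q.1 q.2 := by
    rw [← Finset.sum_add_distrib]
    exact Finset.sum_congr rfl fun q _ => by ring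
  have hsub : T ⊆ Finset.univ.offDiag := by
    intro q hq
    rw [hT] at hq
    rcases Finset.mem_union.mp hq with hq | hq
    · rcases Finset.mem_union.mp hq with hq | hq
      · simp only [Finset.mem_insert, Finset.mem_singleton] at hq
        rcases hq with rfl | rfl
        · exact Finset.mem_offDiag.mpr ⟨Finset.mem_univ _, Finset.mem_univ _, hij⟩
        · exact Finset.mem_offDiag.mpr ⟨Finset.mem_univ _, Finset.mem_univ _,
            fun h => hij h.symm⟩
      · obtain ⟨k, hk, rfl⟩ := Finset.mem_image.mp hq
        exact Finset.mem_offDiag.mpr ⟨Finset.mem_univ _, Finset.mem_univ _,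
          fun h => (hks k hk).1 h.symm⟩
    · obtain ⟨k, hk, rfl⟩ := Finset.mem_image.mp hq
      exact Finset.mem_offDiag.mpr ⟨Finset.mem_univ _, Finset.mem_univ _, (hks k hk).2⟩
  have hzero : ∀ q ∈ Finset.univ.offDiag, q ∉ T → (w q - 1) * K q.1 q.2 = 0 := by
    intro q hqo hqT
    have hqne : q.1 ≠ q.2 := (Finset.mem_offDiag.mp hqo).2.2
    have hq1 : q.1 ≠ i := by
      intro h
      by_cases h2 : q.2 = j
      · exact hqT (by
          rw [hT]
          refine Finset.mem_union_left _ (Finset.mem_union_left _ ?_)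
          simp [Prod.ext_iff, h, h2])
      · refine hqT (by
          rw [hT]
          refine Finset.mem_union_left _ (Finset.mem_union_right _ ?_)
          refine Finset.mem_image.mpr ⟨q.2, ?_, by rw [← h]⟩
          rw [hs, Finset.mem_sdiff]
          refine ⟨Finset.mem_univ _, ?_⟩
          simp only [Finset.mem_insert, Finset.mem_singleton]
          rintro (rfl | h3)
          · exact hqne h
          · exact h2 h3)
    have hq2 : q.2 ≠ j := by
      intro h
      refine hqT (by
        rw [hT]
        refine Finset.mem_union_right _ ?_
        refine Finset.mem_image.mpr ⟨q.1, ?_, by rw [← h]⟩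
        rw [hs, Finset.mem_sdiff]
        refine ⟨Finset.mem_univ _, ?_⟩
        simp only [Finset.mem_insert, Finset.mem_singleton]
        rintro (h3 | rfl)
        · exact hq1 h3
        · exact hqne h.symm)
    have hq3 : ¬(q.1 = j ∧ q.2 = i) := by
      rintro ⟨h1, h2⟩
      exact hqT (by
        rw [hT]
        refine Finset.mem_union_left _ (Finset.mem_union_left _ ?_)
        simp [Prod.ext_iff, h1, h2])
    rw [hw]
    simp [hq1, hq2, hq3]
  have step2 : ∑ q ∈ Finset.univ.offDiag, (w q - 1) * K q.1 q.2
      = ∑ q ∈ T, (w q - 1) * K q.1 q.2 :=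
    (Finset.sum_subset hsub hzero).symm
  have hd1 : Disjoint ({(i, j), (j, i)} : Finset (Fin m × Fin m)) (s.image fun k => (i, k)) := by
    rw [Finset.disjoint_left]
    intro q hq hq'
    obtain ⟨k, hk, rfl⟩ := Finset.mem_image.mp hq'
    simp only [Finset.mem_insert, Finset.mem_singleton, Prod.mk.injEq] at hq
    rcases hq with ⟨-, h⟩ | ⟨h, -⟩
    · exact (hks k hk).2 h
    · exact hij h
  have hd2 : Disjoint (({(i, j), (j, i)} : Finset (Fin m × Fin m)) ∪ s.image fun k => (i, k))
      (s.image fun k => (k, j)) := by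
    rw [Finset.disjoint_left]
    intro q hq hq'
    obtain ⟨k, hk, rfl⟩ := Finset.mem_image.mp hq'
    rcases Finset.mem_union.mp hq with hq | hq
    · simp only [Finset.mem_insert, Finset.mem_singleton, Prod.mk.injEq] at hq
      rcases hq with ⟨h, -⟩ | ⟨-, h⟩
      · exact (hks k hk).1 h
      · exact hij h.symm
    · obtain ⟨k', hk', hkk⟩ := Finset.mem_image.mp hq
      rw [Prod.mk.injEq] at hkk
      exact (hks k' hk').2 hkk.2
  have step3 : ∑ q ∈ T, (w q - 1) * K q.1 q.2
      = ((θ ^ 2 - 1 : ℝ) : ℂ) * K i j + ((θ - 1 : ℝ) : ℂ) * K j i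
        + ((θ - 1 : ℝ) : ℂ) * ∑ k ∈ s, (K i k + K k j) := by
    rw [hT, Finset.sum_union hd2, Finset.sum_union hd1]
    have e1 : ∑ q ∈ ({(i, j), (j, i)} : Finset (Fin m × Fin m)), (w q - 1) * K q.1 q.2
        = ((θ ^ 2 - 1 : ℝ) : ℂ) * K i j + ((θ - 1 : ℝ) : ℂ) * K j i := by
      rw [Finset.sum_pair (by simp [Prod.ext_iff, hij])]
      have w1 : w (i, j) = ((θ * θ : ℝ) : ℂ) := by
        rw [hw]; simp [hij]
      have w2 : w (j, i) = ((θ : ℝ) : ℂ) := by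
        have hji : j ≠ i := fun h => hij h.symm
        rw [hw]; simp [hij, hji]
      rw [w1, w2]
      push_cast
      ring
    have e2 : ∑ q ∈ s.image (fun k => ((i : Fin m), k)), (w q - 1) * K q.1 q.2
        = ∑ k ∈ s, ((θ - 1 : ℝ) : ℂ) * K i k := by
      rw [Finset.sum_image (by intro a _ b _ h; simpa using h)]
      refine Finset.sum_congr rfl fun k hk => ?_
      have : w (i, k) = ((θ : ℝ) : ℂ) := by
        have hji : j ≠ i := fun h => hij h.symm
        rw [hw]; simp [(hks k hk).1, (hks k hk).2, hij, hji]
      rw [this]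
      push_cast
      ring
    have e3 : ∑ q ∈ s.image (fun k => (k, (j : Fin m))), (w q - 1) * K q.1 q.2
        = ∑ k ∈ s, ((θ - 1 : ℝ) : ℂ) * K k j := by
      rw [Finset.sum_image (by intro a _ b _ h; simpa using h)]
      refine Finset.sum_congr rfl fun k hk => ?_
      have : w (k, j) = ((θ : ℝ) : ℂ) := by
        have hji : j ≠ i := fun h => hij h.symm
        rw [hw]; simp [(hks k hk).1, (hks k hk).2, hij, hji]
      rw [this]
      push_cast
      ring
    rw [e1, e2, e3, Finset.mul_sum]
    have hsplit : ∑ k ∈ s, ((θ - 1 : ℝ) : ℂ) * (K i k + K k j)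
        = ∑ k ∈ s, ((θ - 1 : ℝ) : ℂ) * K i k + ∑ k ∈ s, ((θ - 1 : ℝ) : ℂ) * K k j := by
      rw [← Finset.sum_add_distrib]
      exact Finset.sum_congr rfl fun k _ => by ring
    rw [hsplit]
    ring
  rw [step1, step2, step3, hs]

theorem stmt_6 {m : ℕ} (hm : 2 ≤ m) (θ : ℝ) (hθ : 0 < θ)
    (K : Matrix (Fin m) (Fin m) ℂ) (i j : Fin m) (hij : i ≠ j) :
    (∑ σ : Equiv.Perm (Fin m), ewens θ σ • (permMat σ * K * (permMat σ)ᴴ)) i j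
      = ( ((θ ^ 2 - 1 : ℝ) : ℂ) * K i j + ((θ - 1 : ℝ) : ℂ) * K j i
          + ((θ - 1 : ℝ) : ℂ) * ∑ k ∈ Finset.univ \ {i, j}, (K i k + K k j)
          + ∑ q ∈ Finset.univ.offDiag, K q.1 q.2 )
        / (((θ + m - 2) * (θ + m - 1) : ℝ) : ℂ) := by
  classical
  have hLHS : (∑ σ : Equiv.Perm (Fin m), ewens θ σ • (permMat σ * K * (permMat σ)ᴴ)) i j
      = ∑ σ : Perm (Fin m), ((ewens θ σ : ℝ) : ℂ) * K (σ i) (σ j) := by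
    rw [Matrix.sum_apply]
    refine Finset.sum_congr rfl fun σ _ => ?_
    rw [Matrix.smul_apply, permMat_entry, Complex.real_smul]
  rw [hLHS]
  have hmem : ∀ σ : Perm (Fin m), (σ i, σ j) ∈ Finset.univ.offDiag := fun σ =>
    Finset.mem_offDiag.mpr ⟨Finset.mem_univ _, Finset.mem_univ _, fun h => hij (σ.injective h)⟩
  calc ∑ σ : Perm (Fin m), ((ewens θ σ : ℝ) : ℂ) * K (σ i) (σ j)
      = ∑ σ : Perm (Fin m), ∑ q ∈ Finset.univ.offDiag,
          (if (σ i, σ j) = q then ((ewens θ σ : ℝ) : ℂ) * K q.1 q.2 else 0) := by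
        refine Finset.sum_congr rfl fun σ _ => ?_
        rw [Finset.sum_ite_eq Finset.univ.offDiag (σ i, σ j)
            (fun q => ((ewens θ σ : ℝ) : ℂ) * K q.1 q.2), if_pos (hmem σ)]
    _ = ∑ q ∈ Finset.univ.offDiag, ∑ σ : Perm (Fin m),
          (if (σ i, σ j) = q then ((ewens θ σ : ℝ) : ℂ) * K q.1 q.2 else 0) :=
        Finset.sum_comm
    _ = ∑ q ∈ Finset.univ.offDiag,
          ((((if q.1 = i then θ else 1) * (if q.2 = j then θ else 1) *
            (if q.1 = j ∧ q.2 = i then θ else 1) : ℝ) : ℂ)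
            / (((θ + m - 2) * (θ + m - 1) : ℝ) : ℂ)) * K q.1 q.2 := by
        refine Finset.sum_congr rfl fun q hq => ?_
        have hq12 : q.1 ≠ q.2 := (Finset.mem_offDiag.mp hq).2.2
        calc ∑ σ : Perm (Fin m),
              (if (σ i, σ j) = q then ((ewens θ σ : ℝ) : ℂ) * K q.1 q.2 else 0)
            = (∑ σ : Perm (Fin m),
                (if σ i = q.1 ∧ σ j = q.2 then ((ewens θ σ : ℝ) : ℂ) else 0)) * K q.1 q.2 := by
              rw [Finset.sum_mul]
              refine Finset.sum_congr rfl fun σ _ => ?_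
              rw [if_congr (Prod.ext_iff.trans Iff.rfl) rfl rfl]
              split_ifs <;> simp
          _ = (((∑ σ : Perm (Fin m), if σ i = q.1 ∧ σ j = q.2 then ewens θ σ else 0 : ℝ)) : ℂ)
                * K q.1 q.2 := by
              rw [Complex.ofReal_sum]
              congr 1
              exact Finset.sum_congr rfl fun σ _ => by
                split_ifs <;> simp
          _ = ((((if q.1 = i then θ else 1) * (if q.2 = j then θ else 1) *
                (if q.1 = j ∧ q.2 = i then θ else 1) : ℝ) : ℂ)
                / (((θ + m - 2) * (θ + m - 1) : ℝ) : ℂ)) * K q.1 q.2 := by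
              rw [ewens_cond_sum hm hθ i j hij hq12, Complex.ofReal_div]
    _ = (∑ q ∈ Finset.univ.offDiag,
          (((if q.1 = i then θ else 1) * (if q.2 = j then θ else 1) *
            (if q.1 = j ∧ q.2 = i then θ else 1) : ℝ) : ℂ) * K q.1 q.2)
          / (((θ + m - 2) * (θ + m - 1) : ℝ) : ℂ) := by
        rw [Finset.sum_div]
        exact Finset.sum_congr rfl fun q _ => by rw [div_mul_eq_mul_div]
    _ = _ := by rw [offDiag_weighted θ i j hij K]
end

section
/- Let D = diag(d_1,...,d_m) be diagonal and K_θ = E[M_σ D M_σ^*] with σ Ewens-distributed with parameter θ > 0. Then K_θ = ((θ−1)/(θ+m−1)) D + (Tr(D)/(θ+m−1)) I_m. -/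
open Matrix

/-! ### Auxiliary cycle-count machinery -/

/-- Total cycle count (including fixed points) for a permutation of a finite type. -/
def Kc {α : Type*} [Fintype α] [DecidableEq α] (σ : Equiv.Perm α) : ℕ :=
  (Fintype.card α - σ.support.card) + σ.cycleType.card

lemma cycleCount_eq_Kc {m : ℕ} (σ : Equiv.Perm (Fin m)) : cycleCount σ = Kc σ := by
  simp [cycleCount, Kc, Fintype.card_fin]

section KcLemmas

variable {α : Type*} [Fintype α] [DecidableEq α]

lemma Kc_conj (σ τ : Equiv.Perm α) : Kc (τ * σ * τ⁻¹) = Kc σ := by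
  simp [Kc, Equiv.Perm.cycleType_conj, Equiv.Perm.card_support_conj]

lemma Kc_swap_mul {g : Equiv.Perm α} {x : α} (hx : g x ≠ x) :
    Kc (Equiv.swap x (g x) * g) = Kc g + 1 := by
  classical
  set c := g.cycleOf x with hc
  have hxs : x ∈ g.support := Equiv.Perm.mem_support.2 hx
  have hcmem : c ∈ g.cycleFactorsFinset := Equiv.Perm.cycleOf_mem_cycleFactorsFinset_iff.2 hxs
  have hcyc : c.IsCycle := Equiv.Perm.isCycle_cycleOf g hx
  have hcx : c x = g x := g.cycleOf_apply_self x
  have hdisj : Equiv.Perm.Disjoint (g * c⁻¹) c :=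
    Equiv.Perm.disjoint_mul_inv_of_mem_cycleFactorsFinset hcmem
  set h := g * c⁻¹ with hh
  have hg : g = h * c := by rw [hh]; group
  have hxc : x ∈ c.support := by rw [Equiv.Perm.mem_support, hcx]; exact hx
  have hcxc : c x ∈ c.support := Equiv.Perm.apply_mem_support.2 hxc
  have hx' : c x ≠ x := by rw [hcx]; exact hx
  have hswsupp : (Equiv.swap x (c x)).support ⊆ c.support := by
    rw [Equiv.Perm.support_swap hx'.symm]
    intro a ha
    rcases Finset.mem_insert.1 ha with rfl | ha
    · exact hxc
    · rcases Finset.mem_singleton.1 ha with rfl; exact hcxc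
  have hdsupp : _root_.Disjoint h.support c.support :=
    Equiv.Perm.disjoint_iff_disjoint_support.1 hdisj
  have hcomm : Commute (Equiv.swap x (c x)) h := by
    apply Equiv.Perm.Disjoint.commute
    rw [Equiv.Perm.disjoint_iff_disjoint_support]
    exact (hdsupp.mono_right hswsupp).symm
  have key : Equiv.swap x (g x) * g = h * (Equiv.swap x (c x) * c) := by
    rw [← hcx, hg, ← mul_assoc, hcomm.eq, mul_assoc]
  have hNh : h.support.card + c.support.card = g.support.card := by
    rw [hg, hdisj.support_mul, Finset.card_union_of_disjoint hdsupp]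
  have hNle : g.support.card ≤ Fintype.card α := Finset.card_le_univ _
  have htg : g.cycleType.card = h.cycleType.card + 1 := by
    rw [hg, hdisj.cycleType_mul, hcyc.cycleType]; simp
  by_cases hA : c (c x) = x
  · have hceq : c = Equiv.swap x (c x) := hcyc.eq_swap_of_apply_apply_eq_self hx' hA
    have h1 : Equiv.swap x (c x) * c = 1 := by
      nth_rewrite 2 [hceq]; exact Equiv.swap_mul_self _ _
    rw [key, h1, mul_one]
    have hsc : c.support.card = 2 := by rw [hceq]; exact Equiv.Perm.card_support_swap hx'.symm
    unfold Kc
    omega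
  · have hcyc' : (Equiv.swap x (c x) * c).IsCycle := hcyc.swap_mul hx' hA
    have hsupp' : (Equiv.swap x (c x) * c).support = c.support \ {x} :=
      Equiv.Perm.support_swap_mul_eq c x hA
    have hcard' : (Equiv.swap x (c x) * c).support.card = c.support.card - 1 := by
      rw [hsupp', Finset.card_sdiff_of_subset (Finset.singleton_subset_iff.2 hxc), Finset.card_singleton]
    have hsc2 : 2 ≤ c.support.card := hcyc.two_le_card_support
    have hdisj' : Equiv.Perm.Disjoint h (Equiv.swap x (c x) * c) := by
      rw [Equiv.Perm.disjoint_iff_disjoint_support]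
      exact hdsupp.mono_right (hsupp' ▸ Finset.sdiff_subset)
    rw [key]
    have hT : (h * (Equiv.swap x (c x) * c)).cycleType.card = h.cycleType.card + 1 := by
      rw [hdisj'.cycleType_mul, hcyc'.cycleType]; simp
    have hS : (h * (Equiv.swap x (c x) * c)).support.card
        = h.support.card + (c.support.card - 1) := by
      rw [hdisj'.support_mul,
        Finset.card_union_of_disjoint (Equiv.Perm.disjoint_iff_disjoint_support.1 hdisj'), hcard']
    unfold Kc
    omega

lemma Kc_swap_mul_fixed {f : Equiv.Perm α} {a b : α} (hab : a ≠ b) (ha : f a = a) :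
    Kc f = Kc (Equiv.swap a b * f) + 1 := by
  have h1 : (Equiv.swap a b * f) a = b := by
    simp [Equiv.Perm.mul_apply, ha]
  have hx : (Equiv.swap a b * f) a ≠ a := by rw [h1]; exact hab.symm
  have := Kc_swap_mul hx
  rw [h1, ← mul_assoc, Equiv.swap_mul_self, one_mul] at this
  omega

end KcLemmas

/-- The canonical equivalence between `Fin n` and the nonzero elements of `Fin (n+1)`. -/
def finSuccNe (n : ℕ) : Fin n ≃ {x : Fin (n+1) // x ≠ 0} where
  toFun x := ⟨x.succ, Fin.succ_ne_zero x⟩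
  invFun y := y.1.pred y.2
  left_inv x := by simp
  right_inv y := by cases y; simp

lemma decompose_zero_eq {n : ℕ} (e : Equiv.Perm (Fin n)) :
    Equiv.Perm.decomposeFin.symm (0, e) = e.extendDomain (finSuccNe n) := by
  ext x
  refine Fin.cases ?_ (fun i => ?_) x
  · rw [Equiv.Perm.decomposeFin_symm_apply_zero,
      Equiv.Perm.extendDomain_apply_not_subtype _ _ (by simp)]
  · rw [Equiv.Perm.decomposeFin_symm_apply_succ]
    have : (i.succ : Fin (n+1)) = (finSuccNe n) i := rfl
    rw [this, Equiv.Perm.extendDomain_apply_image]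
    simp [finSuccNe]

lemma Kc_decompose_zero {n : ℕ} (e : Equiv.Perm (Fin n)) :
    Kc (Equiv.Perm.decomposeFin.symm (0, e)) = Kc e + 1 := by
  rw [decompose_zero_eq]
  have hct : (e.extendDomain (finSuccNe n)).cycleType = e.cycleType :=
    Equiv.Perm.cycleType_extendDomain _
  have hs : (e.extendDomain (finSuccNe n)).support.card = e.support.card := by
    rw [← Equiv.Perm.sum_cycleType, ← Equiv.Perm.sum_cycleType, hct]
  have hle : e.support.card ≤ Fintype.card (Fin n) := Finset.card_le_univ _
  unfold Kc
  rw [hct, hs, Fintype.card_fin, Fintype.card_fin]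
  rw [Fintype.card_fin] at hle
  omega

lemma decompose_ne_zero_eq {n : ℕ} (p : Fin (n+1)) (e : Equiv.Perm (Fin n)) :
    Equiv.Perm.decomposeFin.symm (p, e)
      = Equiv.swap 0 p * Equiv.Perm.decomposeFin.symm (0, e) := by
  ext x
  refine Fin.cases ?_ (fun i => ?_) x
  · simp
  · simp [Equiv.Perm.decomposeFin_symm_apply_succ]

lemma Kc_decompose_ne_zero {n : ℕ} {p : Fin (n+1)} (hp : p ≠ 0) (e : Equiv.Perm (Fin n)) :
    Kc (Equiv.Perm.decomposeFin.symm (p, e)) = Kc e := by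
  have hfix : (Equiv.Perm.decomposeFin.symm (0, e)) 0 = 0 :=
    Equiv.Perm.decomposeFin_symm_apply_zero _ _
  have := Kc_swap_mul_fixed (f := Equiv.Perm.decomposeFin.symm (0, e)) hp.symm hfix
  rw [← decompose_ne_zero_eq, Kc_decompose_zero] at this
  omega

/-! ### Summation identities for the Ewens weights -/

lemma sum_Kc (θ : ℝ) : ∀ n : ℕ, ∑ σ : Equiv.Perm (Fin n), θ ^ Kc σ
    = ∏ k ∈ Finset.range n, (θ + k)
  | 0 => by
    rw [Finset.range_zero, Finset.prod_empty]
    rw [Fintype.sum_eq_single (1 : Equiv.Perm (Fin 0))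
      (fun σ hσ => absurd (Subsingleton.elim σ 1) hσ)]
    simp [Kc]
  | (n+1) => by
    rw [← Equiv.sum_comp (Equiv.Perm.decomposeFin (n := n)).symm, Fintype.sum_prod_type,
      ← Finset.add_sum_erase _ _ (Finset.mem_univ (0 : Fin (n+1)))]
    have h0 : ∑ e : Equiv.Perm (Fin n), θ ^ Kc (Equiv.Perm.decomposeFin.symm (0, e))
        = θ * ∏ k ∈ Finset.range n, (θ + k) := by
      rw [← sum_Kc θ n, Finset.mul_sum]
      exact Finset.sum_congr rfl fun e _ => by rw [Kc_decompose_zero, pow_succ, mul_comm]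
    have h1 : ∀ p ∈ (Finset.univ : Finset (Fin (n+1))).erase 0,
        ∑ e : Equiv.Perm (Fin n), θ ^ Kc (Equiv.Perm.decomposeFin.symm (p, e))
        = ∏ k ∈ Finset.range n, (θ + k) := fun p hp => by
      rw [← sum_Kc θ n]
      exact Finset.sum_congr rfl fun e _ => by
        rw [Kc_decompose_ne_zero (Finset.mem_erase.1 hp).1]
    rw [h0, Finset.sum_congr rfl h1, Finset.sum_const, Finset.card_erase_of_mem (Finset.mem_univ _),
      Finset.card_univ, Fintype.card_fin, Finset.prod_range_succ]
    push_cast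
    ring

lemma sum_cond0 (θ : ℝ) (n : ℕ) (q : Fin (n+1)) :
    ∑ σ : Equiv.Perm (Fin (n+1)), (if σ 0 = q then θ ^ Kc σ else 0)
      = (if q = 0 then θ else 1) * ∏ k ∈ Finset.range n, (θ + k) := by
  rw [← Equiv.sum_comp (Equiv.Perm.decomposeFin (n := n)).symm, Fintype.sum_prod_type]
  have hcond : ∀ (p : Fin (n+1)) (e : Equiv.Perm (Fin n)),
      (Equiv.Perm.decomposeFin.symm (p, e)) 0 = p := fun p e =>
    Equiv.Perm.decomposeFin_symm_apply_zero _ _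
  calc ∑ p : Fin (n+1), ∑ e : Equiv.Perm (Fin n),
        (if (Equiv.Perm.decomposeFin.symm (p, e)) 0 = q
          then θ ^ Kc (Equiv.Perm.decomposeFin.symm (p, e)) else 0)
      = ∑ p : Fin (n+1), ∑ e : Equiv.Perm (Fin n),
        (if p = q then θ ^ Kc (Equiv.Perm.decomposeFin.symm (p, e)) else 0) := by
        refine Finset.sum_congr rfl fun p _ => Finset.sum_congr rfl fun e _ => by rw [hcond]
    _ = ∑ e : Equiv.Perm (Fin n), θ ^ Kc (Equiv.Perm.decomposeFin.symm (q, e)) := by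
        rw [Finset.sum_comm]
        exact Finset.sum_congr rfl fun e _ => by
          rw [Finset.sum_ite_eq' Finset.univ q _]; simp
    _ = (if q = 0 then θ else 1) * ∏ k ∈ Finset.range n, (θ + k) := by
        by_cases hq : q = 0
        · subst hq
          rw [if_pos rfl, ← sum_Kc θ n, Finset.mul_sum]
          exact Finset.sum_congr rfl fun e _ => by
            rw [Kc_decompose_zero, pow_succ, mul_comm]
        · simp only [if_neg hq, one_mul, ← sum_Kc θ n]
          exact Finset.sum_congr rfl fun e _ => by rw [Kc_decompose_ne_zero hq]

lemma sum_cond (θ : ℝ) (n : ℕ) (i j : Fin (n+1)) :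
    ∑ σ : Equiv.Perm (Fin (n+1)), (if σ i = j then θ ^ Kc σ else 0)
      = (if i = j then θ else 1) * ∏ k ∈ Finset.range n, (θ + k) := by
  set π : Equiv.Perm (Fin (n+1)) := Equiv.swap 0 i with hπ
  have hconj : ∀ σ : Equiv.Perm (Fin (n+1)),
      (if (π * σ * π⁻¹) i = j then θ ^ Kc (π * σ * π⁻¹) else 0)
      = (if σ 0 = π j then θ ^ Kc σ else 0) := by
    intro σ
    have hπi : π⁻¹ i = 0 := by simp [hπ, Equiv.swap_apply_right]
    have hcd : (π * σ * π⁻¹) i = j ↔ σ 0 = π j := by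
      rw [Equiv.Perm.mul_apply, Equiv.Perm.mul_apply, hπi]
      constructor
      · intro h; rw [← h]; simp [hπ]
      · intro h; rw [h]; simp [hπ]
    rw [Kc_conj]
    by_cases h : σ 0 = π j
    · rw [if_pos (hcd.2 h), if_pos h]
    · rw [if_neg (fun hh => h (hcd.1 hh)), if_neg h]
  have hbij : ∑ σ : Equiv.Perm (Fin (n+1)), (if σ i = j then θ ^ Kc σ else 0)
      = ∑ σ : Equiv.Perm (Fin (n+1)),
        (if (π * σ * π⁻¹) i = j then θ ^ Kc (π * σ * π⁻¹) else 0) := by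
    exact (Equiv.sum_comp (Equiv.mulRight π⁻¹ |>.trans (Equiv.mulLeft π))
      (fun σ => if σ i = j then θ ^ Kc σ else 0)).symm
  rw [hbij, Finset.sum_congr rfl fun σ _ => hconj σ, sum_cond0]
  congr 1
  have hpj : π j = 0 ↔ i = j := by
    constructor
    · intro h
      have := congrArg π h
      simpa [hπ, Equiv.swap_apply_left] using this.symm
    · intro h; rw [← h]; simp [hπ, Equiv.swap_apply_right]
  by_cases h : i = j
  · rw [if_pos (hpj.2 h), if_pos h]
  · rw [if_neg (fun hh => h (hpj.1 hh)), if_neg h]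

/-! ### Matrix computations -/

lemma permMat_conj {m : ℕ} (σ : Equiv.Perm (Fin m)) (d : Fin m → ℂ) :
    permMat σ * Matrix.diagonal d * (permMat σ)ᴴ = Matrix.diagonal (fun i => d (σ i)) := by
  ext i k
  simp only [Matrix.mul_apply, Matrix.conjTranspose_apply, permMat, Matrix.of_apply,
    Matrix.diagonal_apply, ite_mul, one_mul, zero_mul, Finset.sum_ite_eq', Finset.mem_univ,
    if_true, Finset.sum_ite_eq, apply_ite (star : ℂ → ℂ), star_one, star_zero, mul_ite, mul_one,
    mul_zero, EmbeddingLike.apply_eq_iff_eq]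
  by_cases h : i = k
  · simp [h]
  · simp [h]
    exact fun hk => (h hk.symm).elim

lemma scalar_id (θ : ℝ) (hθ : 0 < θ) (n : ℕ) (d : Fin (n+1) → ℂ) (i : Fin (n+1)) :
    ∑ σ : Equiv.Perm (Fin (n+1)), ((ewens θ σ : ℝ) : ℂ) * d (σ i)
      = (((θ - 1) / (θ + n) : ℝ) : ℂ) * d i + ((1 / (θ + n) : ℝ) : ℂ) * ∑ j, d j := by
  classical
  set Zn : ℝ := ∏ k ∈ Finset.range n, (θ + k) with hZn
  have hZnpos : 0 < Zn := Finset.prod_pos fun k _ => by positivity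
  have hden : (0:ℝ) < θ + n := by positivity
  have hZ : (∏ k ∈ Finset.range (n+1), (θ + k)) = Zn * (θ + n) := by
    rw [Finset.prod_range_succ, hZn]
  have step1 : ∀ σ : Equiv.Perm (Fin (n+1)), ((ewens θ σ : ℝ) : ℂ) * d (σ i)
      = (((θ ^ Kc σ : ℝ) : ℂ) * d (σ i)) / ((Zn * (θ + n) : ℝ) : ℂ) := by
    intro σ
    rw [ewens, cycleCount_eq_Kc, hZ]
    push_cast
    ring
  rw [Finset.sum_congr rfl fun σ _ => step1 σ, ← Finset.sum_div]
  have step2 : ∑ σ : Equiv.Perm (Fin (n+1)), ((θ ^ Kc σ : ℝ) : ℂ) * d (σ i)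
      = ((Zn : ℝ) : ℂ) * ((((θ : ℂ) - 1) * d i) + ∑ j, d j) := by
    have expand : ∀ σ : Equiv.Perm (Fin (n+1)), ((θ ^ Kc σ : ℝ) : ℂ) * d (σ i)
        = ∑ j, (if σ i = j then ((θ ^ Kc σ : ℝ) : ℂ) else 0) * d j := by
      intro σ
      rw [Finset.sum_congr rfl (fun j _ => by
        rw [ite_mul, zero_mul])]
      rw [Finset.sum_ite_eq Finset.univ (σ i) (fun j => ((θ ^ Kc σ : ℝ) : ℂ) * d j)]
      simp
    rw [Finset.sum_congr rfl fun σ _ => expand σ, Finset.sum_comm]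
    have inner : ∀ j, ∑ σ : Equiv.Perm (Fin (n+1)),
        (if σ i = j then ((θ ^ Kc σ : ℝ) : ℂ) else 0) * d j
        = ((if i = j then (θ:ℂ) else 1) * (Zn : ℂ)) * d j := by
      intro j
      rw [← Finset.sum_mul]
      congr 1
      have : ∑ σ : Equiv.Perm (Fin (n+1)), (if σ i = j then ((θ ^ Kc σ : ℝ) : ℂ) else 0)
          = (((if i = j then θ else 1) * Zn : ℝ) : ℂ) := by
        rw [← sum_cond θ n i j]
        push_cast [apply_ite (fun x : ℝ => (x : ℂ))]
        rfl
      rw [this]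
      push_cast [apply_ite (fun x : ℝ => (x : ℂ))]
      rfl
    rw [Finset.sum_congr rfl fun j _ => inner j]
    have split : ∀ j, ((if i = j then (θ:ℂ) else 1) * (Zn : ℂ)) * d j
        = (Zn : ℂ) * d j + (if i = j then ((θ:ℂ) - 1) * (Zn : ℂ) * d j else 0) := by
      intro j
      by_cases h : i = j <;> simp [h] <;> ring
    rw [Finset.sum_congr rfl fun j _ => split j, Finset.sum_add_distrib,
      Finset.sum_ite_eq Finset.univ i (fun j => ((θ:ℂ) - 1) * (Zn : ℂ) * d j)]
    simp only [Finset.mem_univ, if_true, ← Finset.mul_sum]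
    ring
  rw [step2]
  have hZnne : ((Zn : ℝ) : ℂ) ≠ 0 := by
    exact_mod_cast Complex.ofReal_ne_zero.2 (ne_of_gt hZnpos)
  have hdenne : (((θ + n : ℝ)) : ℂ) ≠ 0 := Complex.ofReal_ne_zero.2 (ne_of_gt hden)
  push_cast
  push_cast at hZnne hdenne
  field_simp

theorem stmt_8 {m : ℕ} (θ : ℝ) (hθ : 0 < θ) (d : Fin m → ℂ) :
    (∑ σ : Equiv.Perm (Fin m), ewens θ σ • (permMat σ * Matrix.diagonal d * (permMat σ)ᴴ))
      = (((θ - 1) / (θ + m - 1) : ℝ) : ℂ) • Matrix.diagonal d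
        + ((1 / (θ + m - 1) : ℝ) : ℂ) • (Matrix.diagonal d).trace • (1 : Matrix (Fin m) (Fin m) ℂ) := by
  rcases m with _ | n
  · ext i k
    exact i.elim0
  · have hden : (θ + (↑(n+1) : ℝ) - 1) = θ + n := by push_cast; ring
    rw [hden]
    simp only [permMat_conj]
    ext i k
    simp only [Matrix.sum_apply, Matrix.smul_apply, Matrix.add_apply, Matrix.diagonal_apply,
      Matrix.one_apply, Matrix.trace_diagonal, smul_eq_mul]
    by_cases h : i = k
    · subst h
      simp only [eq_self_iff_true, if_true, mul_one, Complex.real_smul]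
      exact scalar_id θ hθ n d i
    · simp only [if_neg h]
      simp [Complex.real_smul]
end

section
/- With the notation of the hybrid Ewens estimator: for 1 ≤ i < j ≤ p, (K_{θ,m,p})_{ij} = ((θ+p−1)(θ+p−2)/((θ+m−1)(θ+m−2))) a_{ij}; for 1 ≤ i ≤ p < j ≤ m, (K_{θ,m,p})_{ij} = ((p−1)(θ+p−1)/((θ+m−1)(θ+m−2))) a_{ij}; and for p < i < j ≤ m, (K_{θ,m,p})_{ij} = (p(p−1)/((θ+m−1)(θ+m−2))) a_{ij}. -/
open Matrix

/-- The measure on injections `{1,…,p} → {1,…,m}`: the Ewens probability of the set of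
permutations of `{1,…,m}` whose restriction to `{1,…,p}` equals `σ`. -/
noncomputable def extMeasure {p m : ℕ} (h : p ≤ m) (θ : ℝ) (σ : Fin p ↪ Fin m) : ℝ :=
  ∑ τ ∈ Finset.univ.filter
      (fun τ : Equiv.Perm (Fin m) => ∀ i : Fin p, τ (Fin.castLE h i) = σ i),
    ewens θ τ

/-- The `p × m` matrix whose `i`-th row is the standard basis row vector `e_{σ i}`. -/
def Vmat {p m : ℕ} (σ : Fin p ↪ Fin m) : Matrix (Fin p) (Fin m) ℂ :=
  Matrix.of fun i j => if j = σ i then 1 else 0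

namespace EwensAux
open Equiv Equiv.Perm Finset

variable {α : Type*} [Fintype α] [DecidableEq α]

/-- number of cycles, counting fixed points -/
def cyc (σ : Equiv.Perm α) : ℕ := Fintype.card α - σ.support.card + σ.cycleType.card

lemma cyc_eq (σ : Perm α) :
    cyc σ = Fintype.card α - σ.cycleType.sum + Multiset.card σ.cycleType := by
  rw [cyc, σ.sum_cycleType]

lemma cyc_conj (π σ : Perm α) : cyc (π * σ * π⁻¹) = cyc σ := by
  rw [cyc_eq, cyc_eq, cycleType_conj]

lemma mergeCycle {c : Perm α} (hc : c.IsCycle) {x y : α} (hx : c x = x) (hy : c y ≠ y)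
    (hxy : y ≠ x) :
    (swap x y * c).IsCycle ∧ (swap x y * c).support = insert x c.support := by
  set g := swap x y * c with hg
  have hxs : x ∉ c.support := by simp [mem_support, hx]
  have hys : y ∈ c.support := mem_support.2 hy
  have hgx : g x = y := by simp [hg, mul_apply, hx]
  have hfix : ∀ a, a ≠ x → a ∉ c.support → g a = a := by
    intro a hax has
    have hca : c a = a := notMem_support.1 has
    have hay : a ≠ y := fun h => has (h ▸ hys)
    simp [hg, Perm.mul_apply, hca, swap_apply_of_ne_of_ne hax hay]
  have hmem : ∀ a ∈ c.support, g a ≠ a := by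
    intro a has
    have hca : c a ≠ a := mem_support.1 has
    have hcas : c a ∈ c.support := apply_mem_support.2 has
    have hcax : c a ≠ x := fun h => hxs (h ▸ hcas)
    by_cases hcay : c a = y
    · have : g a = x := by simp [hg, Perm.mul_apply, hcay]
      rw [this]; exact fun h => hxs (h ▸ has)
    · have : g a = c a := by simp [hg, Perm.mul_apply, swap_apply_of_ne_of_ne hcax hcay]
      rw [this]; exact hca
  have hsupp : g.support = insert x c.support := by
    ext a
    simp only [mem_support, Finset.mem_insert]
    constructor
    · intro hga
      by_contra hcon
      push_neg at hcon
      exact hga (hfix a hcon.1 (notMem_support.2 hcon.2))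
    · rintro (rfl | has)
      · rw [hgx]; exact hxy
      · exact hmem a (mem_support.2 (by simpa [mem_support] using has))
  have walk : ∀ k : ℕ, (∀ j, j < k → (c ^ (j+1)) y ≠ y) → (g ^ (k+1)) x = (c ^ k) y := by
    intro k
    induction k with
    | zero => intro _; simpa using hgx
    | succ k ih =>
      intro hk
      have h1 : (g ^ (k+1+1)) x = g ((g ^ (k+1)) x) := by
        rw [pow_succ', Perm.mul_apply]
      rw [h1, ih (fun j hj => hk j (Nat.lt_succ_of_lt hj))]
      have hmem2 : (c ^ (k+1)) y ∈ c.support := pow_apply_mem_support.2 hys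
      have hne0 : (c ^ (k+1)) y ≠ x := fun h => hxs (h ▸ hmem2)
      have hne1 : (c ^ (k+1)) y ≠ y := hk k (Nat.lt_succ_self k)
      have h2 : c ((c ^ k) y) = (c ^ (k+1)) y := by
        rw [pow_succ', Perm.mul_apply]
      simp [hg, Perm.mul_apply, h2, swap_apply_of_ne_of_ne hne0 hne1]
  refine ⟨⟨x, by rw [hgx]; exact hxy, ?_⟩, hsupp⟩
  intro b hb
  by_cases hbx : b = x
  · subst hbx; exact SameCycle.refl _ _
  · have hbs : b ∈ c.support := by
      have := (mem_support (x := b)).2 hb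
      rw [hsupp, Finset.mem_insert] at this
      exact this.resolve_left hbx
    have hcb : c b ≠ b := mem_support.1 hbs
    have hex : ∃ k : ℕ, (c ^ k) y = b := by
      obtain ⟨k, -, -, hk⟩ := SameCycle.exists_pow_eq c (hc.sameCycle hy hcb)
      exact ⟨k, hk⟩
    set k₀ := Nat.find hex with hk₀
    have hspec : (c ^ k₀) y = b := Nat.find_spec hex
    have hmin : ∀ j, j < k₀ → (c ^ (j+1)) y ≠ y := by
      intro j hj heq
      have hle : j + 1 ≤ k₀ := hj
      have : (c ^ (k₀ - (j+1))) y = b := by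
        have : (c ^ (k₀ - (j+1))) ((c ^ (j+1)) y) = (c ^ k₀) y := by
          rw [← Perm.mul_apply, ← pow_add, Nat.sub_add_cancel hle]
        rw [heq] at this
        rw [this, hspec]
      exact Nat.find_min hex (by omega) this
    exact ⟨(k₀ + 1 : ℕ), by rw [zpow_natCast, walk k₀ hmin, hspec]⟩


lemma cyc_swap_mul {σ : Perm α} {x y : α} (hx : σ x = x) (hxy : y ≠ x) :
    cyc (swap x y * σ) + 1 = cyc σ := by
  classical
  have hxs : x ∉ σ.support := notMem_support.2 hx
  have hbound : ∀ τ : Perm α, τ.cycleType.sum ≤ Fintype.card α := fun τ => by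
    rw [τ.sum_cycleType]; exact Finset.card_le_univ _
  by_cases hy : σ y = y
  · -- y also fixed: swap is disjoint from σ
    have hys : y ∉ σ.support := notMem_support.2 hy
    have hd : Disjoint (swap x y) σ := by
      intro a
      by_cases hax : a = x
      · right; rw [hax, hx]
      · by_cases hay : a = y
        · right; rw [hay, hy]
        · left; exact swap_apply_of_ne_of_ne hax hay
    have hct : (swap x y * σ).cycleType = (swap x y).cycleType + σ.cycleType :=
      hd.cycleType_mul
    have hsw : (swap x y).cycleType = {2} := by
      have h1 : (swap x y).IsCycle := isCycle_swap hxy.symm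
      rw [h1.cycleType, card_support_swap hxy.symm]
    have h1 := hbound (swap x y * σ)
    rw [hct, hsw] at h1
    rw [cyc_eq, cyc_eq, hct, hsw]
    simp only [Multiset.sum_add, Multiset.card_add, Multiset.sum_singleton,
      Multiset.card_singleton] at h1 ⊢
    omega
  · -- y is in a nontrivial cycle of σ
    set c := σ.cycleOf y with hc
    have hymem : y ∈ σ.support := mem_support.2 hy
    have hcmem : c ∈ σ.cycleFactorsFinset := cycleOf_mem_cycleFactorsFinset_iff.mpr hymem
    have hcyc : c.IsCycle := isCycle_cycleOf σ hy
    have hcy : c y ≠ y := by rw [hc, cycleOf_apply_self]; exact hy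
    have hcx : c x = x := by
      have : x ∉ c.support := fun hmem =>
        hxs (mem_cycleFactorsFinset_support_le hcmem hmem)
      exact notMem_support.1 this
    have hxcs : x ∉ c.support := notMem_support.2 hcx
    obtain ⟨hgcyc, hgsupp⟩ := mergeCycle hcyc hcx hcy hxy
    have hcomm : Commute c σ := self_mem_cycle_factors_commute hcmem
    have hστ : swap x y * σ = (swap x y * c) * (σ * c⁻¹) := by
      rw [mul_assoc, ← mul_assoc c, hcomm.eq, mul_assoc, mul_inv_cancel, mul_one]
    have hagree : ∀ a ∈ c.support, c a = σ a := (mem_cycleFactorsFinset_iff.1 hcmem).2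
    have hdisj : Disjoint (swap x y * c) (σ * c⁻¹) := by
      intro a
      by_cases ha : a ∈ c.support
      · right
        have h1 : c⁻¹ a ∈ c.support := by
          rwa [← support_inv, apply_mem_support, support_inv]
        have : σ (c⁻¹ a) = c (c⁻¹ a) := (hagree _ h1).symm
        rw [Perm.mul_apply, this, ← Perm.mul_apply, mul_inv_cancel, Perm.one_apply]
      · by_cases hax : a = x
        · right
          subst hax
          have h2 : c⁻¹ a = a := inv_eq_iff_eq.2 hcx.symm
          rw [Perm.mul_apply, h2, hx]
        · left
          have hca : c a = a := notMem_support.1 ha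
          have hay : a ≠ y := fun h => ha (h ▸ mem_support.2 hcy)
          rw [Perm.mul_apply, hca, swap_apply_of_ne_of_ne hax hay]
    have hct : (swap x y * σ).cycleType = (swap x y * c).cycleType + (σ * c⁻¹).cycleType := by
      rw [hστ]; exact hdisj.cycleType_mul
    have hgct : (swap x y * c).cycleType = {c.support.card + 1} := by
      rw [hgcyc.cycleType, hgsupp, Finset.card_insert_of_notMem hxcs]
    have hsct : (σ * c⁻¹).cycleType = σ.cycleType - c.cycleType :=
      cycleType_mul_inv_mem_cycleFactorsFinset_eq_sub hcmem
    have hle : c.cycleType ≤ σ.cycleType := cycleType_le_of_mem_cycleFactorsFinset hcmem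
    have hcct : c.cycleType = {c.support.card} := hcyc.cycleType
    have hdecomp : σ.cycleType = c.cycleType + (σ.cycleType - c.cycleType) := by
      rw [add_comm, tsub_add_cancel_of_le hle]
    have h1 := hbound (swap x y * σ)
    rw [cyc_eq, cyc_eq, hct, hgct, hsct, hcct]
    rw [hct, hgct, hsct, hcct] at h1
    conv_rhs => rw [hdecomp, hcct]
    simp only [Multiset.sum_add, Multiset.card_add, Multiset.sum_singleton,
      Multiset.card_singleton] at h1 ⊢
    omega


lemma decomposeFin_symm_eq {n : ℕ} (p : Fin (n+1)) (e : Perm (Fin n)) :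
    Equiv.Perm.decomposeFin.symm (p, e) = swap 0 p * Equiv.Perm.decomposeFin.symm (0, e) := by
  ext a
  refine Fin.cases ?_ (fun x => ?_) a
  · rw [Perm.decomposeFin_symm_apply_zero, mul_apply, Perm.decomposeFin_symm_apply_zero]
    simp
  · rw [Perm.decomposeFin_symm_apply_succ, mul_apply, Perm.decomposeFin_symm_apply_succ]
    simp

lemma cyc_decomposeFin_zero {n : ℕ} (e : Perm (Fin n)) :
    cyc (Equiv.Perm.decomposeFin.symm (0, e)) = cyc e + 1 := by
  classical
  let eqv : Fin n ≃ {x : Fin (n+1) // x ≠ 0} :=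
    { toFun := fun x => ⟨x.succ, x.succ_ne_zero⟩
      invFun := fun x => x.1.pred x.2
      left_inv := fun x => by simp
      right_inv := fun x => by simp }
  have heq : Equiv.Perm.decomposeFin.symm (0, e) = e.extendDomain eqv := by
    refine Equiv.ext fun a => ?_
    refine Fin.cases ?_ (fun x => ?_) a
    · rw [Perm.decomposeFin_symm_apply_zero,
        Perm.extendDomain_apply_not_subtype e eqv (by simp)]
    · rw [Perm.decomposeFin_symm_apply_succ,
        Perm.extendDomain_apply_subtype e eqv (Fin.succ_ne_zero x)]
      simp [eqv]
  have hct : (e.extendDomain eqv).cycleType = e.cycleType := cycleType_extendDomain eqv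
  have hbound : e.cycleType.sum ≤ n := by
    rw [e.sum_cycleType]
    simpa using Finset.card_le_univ e.support
  rw [heq, cyc_eq, cyc_eq, hct, Fintype.card_fin, Fintype.card_fin]
  omega

lemma weight_decomposeFin (θ : ℝ) {n : ℕ} (p : Fin (n+1)) (e : Perm (Fin n)) :
    θ ^ cyc (Equiv.Perm.decomposeFin.symm (p, e))
      = (if p = 0 then θ else 1) * θ ^ cyc e := by
  by_cases hp : p = 0
  · subst hp
    rw [if_pos rfl, cyc_decomposeFin_zero, pow_succ]
    ring
  · rw [if_neg hp, one_mul, decomposeFin_symm_eq]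
    have hfix : Equiv.Perm.decomposeFin.symm ((0 : Fin (n+1)), e) 0 = 0 :=
      Perm.decomposeFin_symm_apply_zero 0 e
    have := cyc_swap_mul (σ := Equiv.Perm.decomposeFin.symm (0, e)) (x := 0) (y := p) hfix hp
    rw [cyc_decomposeFin_zero] at this
    have h2 : cyc (swap 0 p * Equiv.Perm.decomposeFin.symm (0, e)) = cyc e := by omega
    rw [h2]

lemma sum_cyc (θ : ℝ) (n : ℕ) :
    ∑ τ : Perm (Fin n), θ ^ cyc τ = ∏ k ∈ Finset.range n, (θ + k) := by
  induction n with
  | zero =>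
    rw [Finset.range_zero, Finset.prod_empty]
    have h1 : ∀ τ : Perm (Fin 0), cyc τ = 0 := fun τ => by
      have : τ = 1 := Subsingleton.elim _ _
      subst this
      simp [cyc]
    rw [Finset.sum_congr rfl (fun τ _ => by rw [h1 τ, pow_zero])]
    simp
  | succ n ih =>
    rw [← Equiv.sum_comp (Equiv.Perm.decomposeFin (n := n)).symm (fun τ => θ ^ cyc τ)]
    rw [Fintype.sum_prod_type]
    simp only [weight_decomposeFin]
    rw [Finset.prod_range_succ, ← ih]
    have hsum : ∑ p : Fin (n+1), (if p = 0 then θ else 1) = θ + n := by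
      have h2 : ∀ p : Fin (n+1), (if p = 0 then θ else 1) = 1 + (if p = 0 then θ - 1 else 0) := by
        intro p; split <;> ring
      rw [Finset.sum_congr rfl (fun p _ => h2 p), Finset.sum_add_distrib]
      simp [Finset.sum_ite_eq']
      ring
    rw [← Finset.sum_mul_sum, hsum]
    ring


/-- reindex a sum over permutations by conjugation -/
lemma sum_conj {m : ℕ} (π : Perm (Fin m)) (F : Perm (Fin m) → ℝ) :
    ∑ τ : Perm (Fin m), F τ = ∑ τ : Perm (Fin m), F (π * τ * π⁻¹) :=
  (Equiv.sum_comp ((Equiv.mulLeft π).trans (Equiv.mulRight π⁻¹)) F).symm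

lemma sum_cyc_one (θ : ℝ) {n : ℕ} (a b : Fin (n+1)) :
    ∑ τ : Perm (Fin (n+1)), (if τ a = b then θ ^ cyc τ else 0)
      = (if a = b then θ else 1) * ∏ k ∈ Finset.range n, (θ + k) := by
  classical
  rw [sum_conj (swap 0 a)]
  have hstep : ∀ τ : Perm (Fin (n+1)),
      (if (swap 0 a * τ * (swap 0 a)⁻¹) a = b then θ ^ cyc (swap 0 a * τ * (swap 0 a)⁻¹) else 0)
      = (if τ 0 = swap 0 a b then θ ^ cyc τ else 0) := by
    intro τ
    rw [cyc_conj]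
    congr 1
    simp only [swap_inv, mul_apply, swap_apply_right, eq_iff_iff]
    constructor
    · intro h; rw [← h]; simp
    · intro h; rw [h]; simp
  rw [Finset.sum_congr rfl (fun τ _ => hstep τ)]
  rw [← Equiv.sum_comp (Equiv.Perm.decomposeFin (n := n)).symm
    (fun τ => if τ 0 = swap 0 a b then θ ^ cyc τ else 0)]
  rw [Fintype.sum_prod_type]
  simp only [Perm.decomposeFin_symm_apply_zero, weight_decomposeFin]
  have hinner : ∀ q : Fin (n+1),
      (∑ e : Perm (Fin n), if q = swap 0 a b then (if q = 0 then θ else 1) * θ ^ cyc e else 0)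
      = if q = swap 0 a b then (if q = 0 then θ else 1) * ∏ k ∈ Finset.range n, (θ + k)
        else 0 := by
    intro q
    split
    · rw [← Finset.mul_sum, sum_cyc]
    · simp
  rw [Finset.sum_congr rfl (fun q _ => hinner q), Finset.sum_ite_eq' Finset.univ (swap 0 a b)]
  simp only [Finset.mem_univ, if_true]
  have hcond : (swap 0 a b = 0) = (a = b) := by
    rw [eq_iff_iff]
    constructor
    · intro h
      have : swap 0 a b = swap 0 a a := by rw [h, swap_apply_right]
      exact ((swap 0 a).injective this).symm
    · intro h; rw [← h, swap_apply_right]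
  simp only [hcond]

lemma sum_cyc_two_aux (θ : ℝ) {n : ℕ} (b c d : Fin (n+2)) (hc : c ≠ 0) (hbd : b ≠ d) :
    ∑ τ : Perm (Fin (n+2)), (if τ 0 = b ∧ τ c = d then θ ^ cyc τ else 0)
      = (if (0 : Fin (n+2)) = b then θ else 1) * (if c = d then θ else 1) *
        (if (0 : Fin (n+2)) = d ∧ c = b then θ else 1) * ∏ k ∈ Finset.range n, (θ + k) := by
  classical
  rw [← Equiv.sum_comp (Equiv.Perm.decomposeFin (n := n+1)).symm
    (fun τ => if τ 0 = b ∧ τ c = d then θ ^ cyc τ else 0)]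
  rw [Fintype.sum_prod_type]
  simp only [Perm.decomposeFin_symm_apply_zero, weight_decomposeFin, ite_and]
  have hinner : ∀ q : Fin (n+2),
      (∑ e : Perm (Fin (n+1)),
        if q = b then (if Equiv.Perm.decomposeFin.symm (q, e) c = d
          then (if q = 0 then θ else 1) * θ ^ cyc e else 0) else 0)
      = if q = b then (∑ e : Perm (Fin (n+1)),
          if Equiv.Perm.decomposeFin.symm (q, e) c = d
          then (if q = 0 then θ else 1) * θ ^ cyc e else 0) else 0 := by
    intro q; split
    · rfl
    · simp
  rw [Finset.sum_congr rfl (fun q _ => hinner q), Finset.sum_ite_eq' Finset.univ b]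
  simp only [Finset.mem_univ, if_true]
  set t := c.pred hc with ht
  have hct : c = t.succ := (Fin.succ_pred c hc).symm
  have happ : ∀ e : Perm (Fin (n+1)),
      Equiv.Perm.decomposeFin.symm (b, e) c = swap 0 b (e t).succ := by
    intro e
    conv_lhs => rw [hct]
    exact Perm.decomposeFin_symm_apply_succ e b t
  simp only [happ]
  -- condition : swap 0 b (e t).succ = d ↔ (e t).succ = swap 0 b d
  have hcond : ∀ z : Fin (n+2), (swap 0 b z = d) = (z = swap 0 b d) := by
    intro z
    rw [eq_iff_iff]
    constructor
    · intro h; rw [← h, swap_apply_self]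
    · intro h; rw [h, swap_apply_self]
  simp only [hcond]
  have hd0 : swap 0 b d ≠ 0 := by
    intro h
    have : swap 0 b d = swap 0 b b := by rw [h, swap_apply_right]
    exact hbd ((swap 0 b).injective this).symm
  set s := (swap 0 b d).pred hd0 with hs
  have hds : swap 0 b d = s.succ := (Fin.succ_pred _ hd0).symm
  have hcond2 : ∀ e : Perm (Fin (n+1)), ((e t).succ = swap 0 b d) = (e t = s) := by
    intro e
    rw [eq_iff_iff, hds]
    exact ⟨fun h => Fin.succ_injective _ h, fun h => by rw [h]⟩
  simp only [hcond2]
  have hpull : (∑ e : Perm (Fin (n+1)), if e t = s then (if b = 0 then θ else 1) * θ ^ cyc e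
      else 0) = (if b = 0 then θ else 1) *
      ∑ e : Perm (Fin (n+1)), (if e t = s then θ ^ cyc e else 0) := by
    rw [Finset.mul_sum]
    refine Finset.sum_congr rfl fun e _ => ?_
    split <;> simp
  rw [hpull, sum_cyc_one]
  -- now pure case bash on the if-conditions
  have hts : (t = s) = (c = swap 0 b d) := by
    rw [eq_iff_iff, hct, hds]
    exact ⟨fun h => by rw [h], fun h => Fin.succ_injective _ h⟩
  simp only [hts]
  by_cases hb0 : b = 0
  · -- b = 0, hence d ≠ 0
    subst hb0
    have hdd : d ≠ 0 := fun h => hbd h.symm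
    have h1 : ((0 : Fin (n+2)) = d) = False := by simp [Ne.symm hdd]
    simp only [swap_self, Equiv.refl_apply, h1, if_pos rfl, if_false, false_and]
    ring
  · have hb0' : ((0 : Fin (n+2)) = b) = False := by simp [Ne.symm hb0]
    by_cases hdb : d = 0
    · subst hdb
      have h2 : swap (0 : Fin (n+2)) b 0 = b := swap_apply_left 0 b
      have h3 : (c = (0:Fin (n+2))) = False := by simp [hc]
      simp only [h2, h3, hb0', if_false, if_pos rfl, true_and, if_neg hb0, if_true]
      ring
    · have h5 : swap (0:Fin (n+2)) b d = d :=
        swap_apply_of_ne_of_ne (fun h => hdb h) (fun h => hbd h.symm)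
      have h6 : ((0:Fin (n+2)) = d) = False := by simp [Ne.symm hdb]
      simp only [h5, h6, hb0', if_false, false_and, if_neg hb0]
      ring



lemma sum_cyc_two (θ : ℝ) {n : ℕ} (a b c d : Fin (n+2)) (hac : a ≠ c) (hbd : b ≠ d) :
    ∑ τ : Perm (Fin (n+2)), (if τ a = b ∧ τ c = d then θ ^ cyc τ else 0)
      = (if a = b then θ else 1) * (if c = d then θ else 1) *
        (if a = d ∧ c = b then θ else 1) * ∏ k ∈ Finset.range n, (θ + k) := by
  classical
  rw [sum_conj (swap 0 a)]
  have hswap : ∀ z w : Fin (n+2), (swap 0 a z = w) = (z = swap 0 a w) := by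
    intro z w
    rw [eq_iff_iff]
    constructor
    · intro h; rw [← h, swap_apply_self]
    · intro h; rw [h, swap_apply_self]
  have hstep : ∀ τ : Perm (Fin (n+2)),
      (if (swap 0 a * τ * (swap 0 a)⁻¹) a = b ∧ (swap 0 a * τ * (swap 0 a)⁻¹) c = d
        then θ ^ cyc (swap 0 a * τ * (swap 0 a)⁻¹) else 0)
      = (if τ 0 = swap 0 a b ∧ τ (swap 0 a c) = swap 0 a d then θ ^ cyc τ else 0) := by
    intro τ
    rw [cyc_conj]
    congr 1
    simp only [swap_inv, mul_apply, swap_apply_right, hswap, eq_iff_iff]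
  rw [Finset.sum_congr rfl (fun τ _ => hstep τ)]
  have hc0 : swap 0 a c ≠ 0 := by
    intro h
    have : swap 0 a c = swap 0 a a := by rw [h, swap_apply_right]
    exact hac (((swap 0 a).injective this).symm)
  have hbd' : swap 0 a b ≠ swap 0 a d := fun h => hbd ((swap 0 a).injective h)
  rw [sum_cyc_two_aux θ _ _ _ hc0 hbd']
  have e1 : ((0 : Fin (n+2)) = swap 0 a b) = (a = b) := by
    rw [eq_iff_iff]
    constructor
    · intro h
      have h2 : swap 0 a b = swap 0 a a := by rw [← h, swap_apply_right]
      exact ((swap 0 a).injective h2).symm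
    · intro h; rw [← h, swap_apply_right]
  have e2 : (swap 0 a c = swap 0 a d) = (c = d) := by
    rw [eq_iff_iff]
    exact ⟨fun h => (swap 0 a).injective h, fun h => by rw [h]⟩
  have e3 : ((0 : Fin (n+2)) = swap 0 a d) = (a = d) := by
    rw [eq_iff_iff]
    constructor
    · intro h
      have h2 : swap 0 a d = swap 0 a a := by rw [← h, swap_apply_right]
      exact ((swap 0 a).injective h2).symm
    · intro h; rw [← h, swap_apply_right]
  have e4 : (swap 0 a c = swap 0 a b) = (c = b) := by
    rw [eq_iff_iff]
    exact ⟨fun h => (swap 0 a).injective h, fun h => by rw [h]⟩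
  simp only [e1, e2, e3, e4]


lemma entry_formula {p m : ℕ} (A : Matrix (Fin m) (Fin m) ℂ) (i j : Fin m)
    (σ : Fin p ↪ Fin m) :
    ((Vmat σ)ᵀ * (Vmat σ * A * (Vmat σ)ᵀ) * Vmat σ) i j
      = ((∑ a : Fin p, if σ a = i then (1:ℂ) else 0) *
         (∑ b : Fin p, if σ b = j then (1:ℂ) else 0)) * A i j := by
  have hVA : ∀ (a : Fin p) (d : Fin m), (Vmat σ * A) a d = A (σ a) d := by
    intro a d
    rw [Matrix.mul_apply]
    simp [Vmat, ite_mul, Finset.sum_ite_eq']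
  have hX : ∀ a b : Fin p, (Vmat σ * A * (Vmat σ)ᵀ) a b = A (σ a) (σ b) := by
    intro a b
    rw [Matrix.mul_apply]
    simp only [Matrix.transpose_apply, hVA]
    simp [Vmat, mul_ite, Finset.sum_ite_eq']
  rw [Matrix.mul_apply]
  have h1 : ∀ b : Fin p, ((Vmat σ)ᵀ * (Vmat σ * A * (Vmat σ)ᵀ)) i b * Vmat σ b j
      = ∑ a : Fin p, ((if σ a = i then (1:ℂ) else 0) * (if σ b = j then (1:ℂ) else 0)) * A i j := by
    intro b
    rw [Matrix.mul_apply, Finset.sum_mul]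
    refine Finset.sum_congr rfl fun a _ => ?_
    rw [Matrix.transpose_apply, hX]
    show (if i = σ a then (1:ℂ) else 0) * A (σ a) (σ b) * (if j = σ b then 1 else 0) = _
    by_cases h1 : σ a = i
    · by_cases h2 : σ b = j
      · rw [← h1, ← h2]; simp
      · rw [if_neg h2, if_neg (show ¬ j = σ b from fun hh => h2 hh.symm)]; ring
    · rw [if_neg h1, if_neg (show ¬ i = σ a from fun hh => h1 hh.symm)]; ring
  rw [Finset.sum_congr rfl fun b _ => h1 b]
  rw [Finset.sum_comm]
  symm
  rw [Finset.sum_mul_sum (Finset.univ) (Finset.univ)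
    (fun a : Fin p => if σ a = i then (1:ℂ) else 0)
    (fun b : Fin p => if σ b = j then (1:ℂ) else 0), Finset.sum_mul]
  refine Finset.sum_congr rfl fun a _ => ?_
  rw [Finset.sum_mul]

lemma entry_eq_s13 {p m : ℕ} (h : p ≤ m) (θ : ℝ) (A : Matrix (Fin m) (Fin m) ℂ) (i j : Fin m) :
    (∑ σ : Fin p ↪ Fin m,
        extMeasure h θ σ • ((Vmat σ)ᵀ * (Vmat σ * A * (Vmat σ)ᵀ) * Vmat σ)) i j
      = ((∑ τ : Equiv.Perm (Fin m), ewens θ τ *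
          ((∑ k : Fin p, if τ (Fin.castLE h k) = i then (1:ℝ) else 0) *
           (∑ l : Fin p, if τ (Fin.castLE h l) = j then (1:ℝ) else 0)) : ℝ) : ℂ) * A i j := by
  classical
  rw [Matrix.sum_apply]
  have hterm : ∀ σ : Fin p ↪ Fin m,
      (extMeasure h θ σ • ((Vmat σ)ᵀ * (Vmat σ * A * (Vmat σ)ᵀ) * Vmat σ)) i j
      = ∑ τ : Equiv.Perm (Fin m),
          (if (∀ k : Fin p, τ (Fin.castLE h k) = σ k) then
            (ewens θ τ : ℂ) * (((∑ a : Fin p, if σ a = i then (1:ℂ) else 0) *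
              (∑ b : Fin p, if σ b = j then (1:ℂ) else 0)) * A i j) else 0) := by
    intro σ
    rw [Matrix.smul_apply, entry_formula A i j σ, extMeasure, Finset.sum_filter]
    rw [Finset.sum_smul]
    refine Finset.sum_congr rfl fun τ _ => ?_
    split
    · rw [Complex.real_smul]
    · rw [zero_smul]
  refine Eq.trans (Finset.sum_congr rfl fun σ _ => hterm σ) ?_
  rw [Finset.sum_comm, Complex.ofReal_sum, Finset.sum_mul]
  refine Finset.sum_congr rfl fun τ _ => ?_
  set στ : Fin p ↪ Fin m :=
    ⟨fun k => τ (Fin.castLE h k), τ.injective.comp (Fin.castLE_injective h)⟩ with hστ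
  rw [Finset.sum_eq_single στ]
  · rw [if_pos (show ∀ k : Fin p, τ (Fin.castLE h k) = στ k from fun k => rfl)]
    have hca : (∑ a : Fin p, if στ a = i then (1:ℂ) else 0)
        = ((∑ a : Fin p, if τ (Fin.castLE h a) = i then (1:ℝ) else 0 : ℝ) : ℂ) := by
      push_cast
      refine Finset.sum_congr rfl fun a _ => ?_
      simp [στ, apply_ite (Complex.ofReal)]
    have hcb : (∑ b : Fin p, if στ b = j then (1:ℂ) else 0)
        = ((∑ b : Fin p, if τ (Fin.castLE h b) = j then (1:ℝ) else 0 : ℝ) : ℂ) := by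
      push_cast
      refine Finset.sum_congr rfl fun b _ => ?_
      simp [στ, apply_ite (Complex.ofReal)]
    rw [hca, hcb]
    push_cast
    ring
  · intro σ _ hne
    rw [if_neg]
    intro hcond
    exact hne (DFunLike.ext _ _ fun k => (hcond k).symm)
  · intro hmem
    exact absurd (Finset.mem_univ στ) hmem


lemma cycleCount_eq {m : ℕ} (σ : Perm (Fin m)) : cycleCount σ = cyc σ := by
  rw [cycleCount, cyc, Fintype.card_fin]

lemma scalar_eq {p n : ℕ} (h : p ≤ n+2) (θ : ℝ) (i j : Fin (n+2)) (hij : i ≠ j) :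
    (∑ τ : Perm (Fin (n+2)), ewens θ τ *
       ((∑ k : Fin p, if τ (Fin.castLE h k) = i then (1:ℝ) else 0) *
        (∑ l : Fin p, if τ (Fin.castLE h l) = j then (1:ℝ) else 0)))
    = (∑ k : Fin p, ∑ l : Fin p, if k = l then 0 else
         (if Fin.castLE h k = i then θ else 1) * (if Fin.castLE h l = j then θ else 1) *
         (if Fin.castLE h k = j ∧ Fin.castLE h l = i then θ else 1)) *
      (∏ k ∈ Finset.range n, (θ + k)) / (∏ k ∈ Finset.range (n+2), (θ + k)) := by
  classical
  simp only [ewens, cycleCount_eq, div_mul_eq_mul_div, ← Finset.sum_div]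
  congr 1
  · -- numerator equality
    have hstep : ∀ τ : Perm (Fin (n+2)),
        θ ^ cyc τ * ((∑ k : Fin p, if τ (Fin.castLE h k) = i then (1:ℝ) else 0) *
          (∑ l : Fin p, if τ (Fin.castLE h l) = j then (1:ℝ) else 0))
        = ∑ k : Fin p, ∑ l : Fin p,
            (if τ (Fin.castLE h k) = i ∧ τ (Fin.castLE h l) = j then θ ^ cyc τ else 0) := by
      intro τ
      rw [Finset.sum_mul_sum, Finset.mul_sum]
      refine Finset.sum_congr rfl fun k _ => ?_
      rw [Finset.mul_sum]
      refine Finset.sum_congr rfl fun l _ => ?_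
      split_ifs with h1 h2 h3 h4 <;> simp_all
    refine Eq.trans (Finset.sum_congr rfl fun τ _ => hstep τ) ?_
    rw [Finset.sum_comm]
    rw [Finset.sum_mul]
    refine Finset.sum_congr rfl fun k _ => ?_
    rw [Finset.sum_comm]
    rw [Finset.sum_mul]
    refine Finset.sum_congr rfl fun l _ => ?_
    by_cases hkl : k = l
    · subst hkl
      rw [if_pos rfl, zero_mul]
      refine Finset.sum_eq_zero fun τ _ => ?_
      rw [if_neg]
      rintro ⟨h1, h2⟩
      exact hij (h1.symm.trans h2)
    · rw [if_neg hkl]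
      have hac : Fin.castLE h k ≠ Fin.castLE h l :=
        fun hh => hkl (Fin.castLE_injective h hh)
      rw [sum_cyc_two θ _ _ _ _ hac hij]
lemma sum_ite_diag {p : ℕ} (k : Fin p) (f : Fin p → ℝ) :
    ∑ l : Fin p, (if k = l then 0 else f l) = (∑ l : Fin p, f l) - f k := by
  have h1 : ∀ l : Fin p, (if k = l then (0:ℝ) else f l)
      = f l - (if k = l then f l else 0) := by
    intro l; split <;> ring
  rw [Finset.sum_congr rfl fun l _ => h1 l, Finset.sum_sub_distrib,
    Finset.sum_ite_eq Finset.univ k f, if_pos (Finset.mem_univ k)]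

lemma sum_ite_point {p : ℕ} (c : Fin p) (x : ℝ) :
    ∑ k : Fin p, (if k = c then x else 1) = x + p - 1 := by
  have h1 : ∀ k : Fin p, (if k = c then x else (1:ℝ))
      = 1 + (if k = c then x - 1 else 0) := by
    intro k; split <;> ring
  rw [Finset.sum_congr rfl fun k _ => h1 k, Finset.sum_add_distrib,
    Finset.sum_ite_eq' Finset.univ c, if_pos (Finset.mem_univ c)]
  simp only [Finset.sum_const, Finset.card_univ, Fintype.card_fin, nsmul_eq_mul, mul_one]
  ring

lemma case1_sum {p : ℕ} (θ : ℝ) (i₀ j₀ : Fin p) (hne : i₀ ≠ j₀) :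
    ∑ k : Fin p, ∑ l : Fin p, (if k = l then 0 else
      (if k = i₀ then θ else 1) * (if l = j₀ then θ else 1) *
      (if k = j₀ ∧ l = i₀ then θ else 1))
    = (θ + p - 1) * (θ + p - 1) - ((p:ℝ) + 2*(θ-1)) + (θ - 1) := by
  have hsplit : ∀ k l : Fin p, (if k = l then (0:ℝ) else
      (if k = i₀ then θ else 1) * (if l = j₀ then θ else 1) *
      (if k = j₀ ∧ l = i₀ then θ else 1))
      = (if k = l then 0 else (if k = i₀ then θ else 1) * (if l = j₀ then θ else 1))
        + (if k = j₀ ∧ l = i₀ then (θ-1) * ((if k = i₀ then θ else 1) * (if l = j₀ then θ else 1)) else 0) := by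
    intro k l
    by_cases hkl : k = l
    · subst hkl
      rw [if_pos rfl, if_pos rfl, if_neg, zero_add]
      rintro ⟨ha, hb⟩; exact hne (hb.symm.trans ha)
    · rw [if_neg hkl, if_neg hkl]
      by_cases hp : k = j₀ ∧ l = i₀
      · rw [if_pos hp, if_pos hp]; ring
      · rw [if_neg hp, if_neg hp]; ring
  rw [Finset.sum_congr rfl fun k _ => Finset.sum_congr rfl fun l _ => hsplit k l]
  have h2 : ∀ k : Fin p, ∑ l : Fin p,
      ((if k = l then (0:ℝ) else (if k = i₀ then θ else 1) * (if l = j₀ then θ else 1))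
        + (if k = j₀ ∧ l = i₀ then (θ-1) * ((if k = i₀ then θ else 1) * (if l = j₀ then θ else 1)) else 0))
      = ((if k = i₀ then θ else 1) * (θ + p - 1) - (if k = i₀ then θ else 1) * (if k = j₀ then θ else 1))
        + (if k = j₀ then (θ-1) * ((if k = i₀ then θ else 1) * (if i₀ = j₀ then θ else 1)) else 0) := by
    intro k
    rw [Finset.sum_add_distrib]
    congr 1
    · rw [sum_ite_diag k (fun l => (if k = i₀ then θ else 1) * (if l = j₀ then θ else 1))]
      rw [← Finset.mul_sum, sum_ite_point]
    · simp only [ite_and]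
      by_cases hk : k = j₀
      · simp only [if_pos hk]
        rw [Finset.sum_ite_eq' Finset.univ i₀
          (fun l => (θ-1) * ((if k = i₀ then θ else 1) * (if l = j₀ then θ else 1)))]
        simp
      · simp only [if_neg hk, Finset.sum_const_zero]
  rw [Finset.sum_congr rfl fun k _ => h2 k, Finset.sum_add_distrib, Finset.sum_sub_distrib]
  have h3 : ∑ k : Fin p, (if k = i₀ then θ else 1) * (θ + ↑p - 1)
      = (θ + p - 1) * (θ + p - 1) := by
    rw [← Finset.sum_mul, sum_ite_point]
  have h4 : ∑ k : Fin p, (if k = i₀ then θ else 1) * (if k = j₀ then θ else 1)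
      = (p:ℝ) + 2*(θ-1) := by
    have hpt : ∀ k : Fin p, (if k = i₀ then θ else 1) * (if k = j₀ then θ else (1:ℝ))
        = 1 + ((if k = i₀ then θ-1 else 0) + (if k = j₀ then θ-1 else 0)) := by
      intro k
      by_cases h5 : k = i₀
      · have h6 : ¬ k = j₀ := fun hh => hne (h5.symm.trans hh)
        rw [if_pos h5, if_neg h6, if_pos h5, if_neg h6]; ring
      · rw [if_neg h5, if_neg h5]
        by_cases h7 : k = j₀
        · rw [if_pos h7, if_pos h7]; ring
        · rw [if_neg h7, if_neg h7]; ring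
    rw [Finset.sum_congr rfl fun k _ => hpt k, Finset.sum_add_distrib, Finset.sum_add_distrib,
      Finset.sum_ite_eq' Finset.univ i₀, Finset.sum_ite_eq' Finset.univ j₀,
      if_pos (Finset.mem_univ i₀), if_pos (Finset.mem_univ j₀)]
    simp only [Finset.sum_const, Finset.card_univ, Fintype.card_fin, nsmul_eq_mul, mul_one]
    ring
  have h5 : ∑ k : Fin p, (if k = j₀ then (θ-1) * ((if k = i₀ then θ else 1) * (if i₀ = j₀ then θ else 1)) else 0)
      = θ - 1 := by
    rw [Finset.sum_ite_eq' Finset.univ j₀, if_pos (Finset.mem_univ j₀),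
      if_neg (fun hh => hne hh.symm), if_neg hne]
    ring
  rw [h3, h4, h5]

lemma case2_sum {p : ℕ} (θ : ℝ) (i₀ : Fin p) :
    ∑ k : Fin p, ∑ l : Fin p, (if k = l then 0 else (if k = i₀ then θ else 1))
    = (θ + p - 1) * ((p:ℝ) - 1) := by
  have h1 : ∀ k : Fin p, ∑ l : Fin p, (if k = l then (0:ℝ) else (if k = i₀ then θ else 1))
      = (if k = i₀ then θ else 1) * ((p:ℝ) - 1) := by
    intro k
    rw [sum_ite_diag k (fun _ => (if k = i₀ then θ else 1))]
    simp only [Finset.sum_const, Finset.card_univ, Fintype.card_fin, nsmul_eq_mul]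
    ring
  rw [Finset.sum_congr rfl fun k _ => h1 k, ← Finset.sum_mul, sum_ite_point]

lemma case3_sum {p : ℕ} (θ : ℝ) :
    ∑ k : Fin p, ∑ l : Fin p, (if k = l then (0:ℝ) else 1) = (p:ℝ) * ((p:ℝ) - 1) := by
  have h1 : ∀ k : Fin p, ∑ l : Fin p, (if k = l then (0:ℝ) else 1) = (p:ℝ) - 1 := by
    intro k
    rw [sum_ite_diag k (fun _ => (1:ℝ))]
    simp
  rw [Finset.sum_congr rfl fun k _ => h1 k]
  simp only [Finset.sum_const, Finset.card_univ, Fintype.card_fin, nsmul_eq_mul]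


end EwensAux

open EwensAux in
theorem stmt_13 {p m : ℕ} (h : p ≤ m) (θ : ℝ) (hθ : 0 < θ)
    (A : Matrix (Fin m) (Fin m) ℂ) (i j : Fin m) (hij : (i : ℕ) < (j : ℕ)) :
    (((j : ℕ) < p →
        (∑ σ : Fin p ↪ Fin m,
            extMeasure h θ σ • ((Vmat σ)ᵀ * (Vmat σ * A * (Vmat σ)ᵀ) * Vmat σ)) i j
          = (((θ + p - 1) * (θ + p - 2) / ((θ + m - 1) * (θ + m - 2)) : ℝ) : ℂ) * A i j)
      ∧ ((i : ℕ) < p → p ≤ (j : ℕ) →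
        (∑ σ : Fin p ↪ Fin m,
            extMeasure h θ σ • ((Vmat σ)ᵀ * (Vmat σ * A * (Vmat σ)ᵀ) * Vmat σ)) i j
          = (((p - 1) * (θ + p - 1) / ((θ + m - 1) * (θ + m - 2)) : ℝ) : ℂ) * A i j)
      ∧ (p ≤ (i : ℕ) →
        (∑ σ : Fin p ↪ Fin m,
            extMeasure h θ σ • ((Vmat σ)ᵀ * (Vmat σ * A * (Vmat σ)ᵀ) * Vmat σ)) i j
          = ((p * (p - 1) / ((θ + m - 1) * (θ + m - 2)) : ℝ) : ℂ) * A i j)) := by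
  have hm2 : 2 ≤ m := by have := j.isLt; omega
  obtain ⟨n, rfl⟩ : ∃ n, m = n + 2 := ⟨m - 2, by omega⟩
  have hijne : i ≠ j := fun heq => by rw [heq] at hij; exact lt_irrefl _ hij
  have hRpos : (0:ℝ) < ∏ k ∈ Finset.range n, (θ + k) := by
    apply Finset.prod_pos; intro k _; positivity
  have hR0 : (∏ k ∈ Finset.range n, (θ + (k:ℝ))) ≠ 0 := ne_of_gt hRpos
  have hd1 : (θ + (n:ℝ)) ≠ 0 := by positivity
  have hd2 : (θ + ((n:ℝ) + 1)) ≠ 0 := by positivity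
  have hmain := entry_eq_s13 h θ A i j
  refine ⟨?_, ?_, ?_⟩
  · -- case 1 : i < j < p
    intro hjp
    have hip : (i:ℕ) < p := lt_trans hij hjp
    set i₀ : Fin p := ⟨(i:ℕ), hip⟩ with hi₀
    set j₀ : Fin p := ⟨(j:ℕ), hjp⟩ with hj₀
    have hci : ∀ k : Fin p, (Fin.castLE h k = i) = (k = i₀) := by
      intro k
      rw [eq_iff_iff, Fin.ext_iff, Fin.ext_iff]
      simp [Fin.coe_castLE, hi₀]
    have hcj : ∀ k : Fin p, (Fin.castLE h k = j) = (k = j₀) := by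
      intro k
      rw [eq_iff_iff, Fin.ext_iff, Fin.ext_iff]
      simp [Fin.coe_castLE, hj₀]
    have hne : i₀ ≠ j₀ := by
      intro heq
      have := congrArg Fin.val heq
      simp [hi₀, hj₀] at this
      omega
    rw [hmain, scalar_eq h θ i j hijne]
    congr 1
    rw [Complex.ofReal_inj]
    simp only [hci, hcj]
    rw [case1_sum θ i₀ j₀ hne, Finset.prod_range_succ, Finset.prod_range_succ]
    push_cast
    rw [show θ + ((n:ℝ) + 2) - 1 = θ + ((n:ℝ) + 1) by ring,
      show θ + ((n:ℝ) + 2) - 2 = θ + (n:ℝ) by ring]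
    field_simp
    ring
  · -- case 2 : i < p ≤ j
    intro hip hpj
    set i₀ : Fin p := ⟨(i:ℕ), hip⟩ with hi₀
    have hci : ∀ k : Fin p, (Fin.castLE h k = i) = (k = i₀) := by
      intro k
      rw [eq_iff_iff, Fin.ext_iff, Fin.ext_iff]
      simp [Fin.coe_castLE, hi₀]
    have hcj : ∀ k : Fin p, (Fin.castLE h k = j) = False := by
      intro k
      rw [eq_iff_iff, iff_false]
      intro heq
      have := congrArg Fin.val heq
      simp [Fin.coe_castLE] at this
      have := k.isLt
      omega
    rw [hmain, scalar_eq h θ i j hijne]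
    congr 1
    rw [Complex.ofReal_inj]
    simp only [hci, hcj, if_false, false_and, mul_one]
    rw [case2_sum θ i₀, Finset.prod_range_succ, Finset.prod_range_succ]
    push_cast
    rw [show θ + ((n:ℝ) + 2) - 1 = θ + ((n:ℝ) + 1) by ring,
      show θ + ((n:ℝ) + 2) - 2 = θ + (n:ℝ) by ring]
    field_simp
  · -- case 3 : p ≤ i < j
    intro hpi
    have hpj : p ≤ (j:ℕ) := le_trans hpi (le_of_lt hij)
    have hci : ∀ k : Fin p, (Fin.castLE h k = i) = False := by
      intro k
      rw [eq_iff_iff, iff_false]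
      intro heq
      have := congrArg Fin.val heq
      simp [Fin.coe_castLE] at this
      have := k.isLt
      omega
    have hcj : ∀ k : Fin p, (Fin.castLE h k = j) = False := by
      intro k
      rw [eq_iff_iff, iff_false]
      intro heq
      have := congrArg Fin.val heq
      simp [Fin.coe_castLE] at this
      have := k.isLt
      omega
    rw [hmain, scalar_eq h θ i j hijne]
    congr 1
    rw [Complex.ofReal_inj]
    simp only [hci, hcj, if_false, false_and, mul_one, one_mul]
    rw [case3_sum θ, Finset.prod_range_succ, Finset.prod_range_succ]
    push_cast
    rw [show θ + ((n:ℝ) + 2) - 1 = θ + ((n:ℝ) + 1) by ring,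
      show θ + ((n:ℝ) + 2) - 2 = θ + (n:ℝ) by ring]
    field_simp
end

section
/- Let D = diag(d_1,...,d_p, 0,...,0) be an m×m diagonal matrix whose first p entries d_1,...,d_p are nonzero. Then E[V_σ^T (V_σ D V_σ^T)^+ V_σ] = (p/(θ+m−1)) D^+ + ((θ−1)/(θ+m−1)) diag(d_1^{-1},...,d_p^{-1},0,...,0), where the expectation is over random injections σ ∈ S_{p,m} with the measure μ_{θ,m,p} induced by the Ewens measure, and X^+ denotes the Moore–Penrose pseudoinverse. -/
open Matrix

/-- The Moore–Penrose pseudoinverse of a complex square matrix, defined (noncomputably) as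
the matrix satisfying the four Penrose conditions. -/
noncomputable def pinv {p : ℕ} (W : Matrix (Fin p) (Fin p) ℂ) : Matrix (Fin p) (Fin p) ℂ :=
  Classical.epsilon fun X : Matrix (Fin p) (Fin p) ℂ =>
    W * X * W = W ∧ X * W * X = X ∧ (W * X)ᴴ = W * X ∧ (X * W)ᴴ = X * W

open Equiv Equiv.Perm in
lemma split_aux {m : ℕ} (g : Equiv.Perm (Fin m)) (a : Fin m) (ha : g a ≠ a) :
    cycleCount (Equiv.swap a (g a) * g) = cycleCount g + 1 := by
  classical
  set C := g.cycleOf a with hCdef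
  have hCmem : C ∈ g.cycleFactorsFinset :=
    cycleOf_mem_cycleFactorsFinset_iff.mpr (mem_support.mpr ha)
  have hCa : C a = g a := g.cycleOf_apply_self a
  have hCcycle : C.IsCycle := isCycle_cycleOf g ha
  have hCa' : C a ≠ a := by rw [hCa]; exact ha
  set D := g * C⁻¹ with hDdef
  have hdisj : Disjoint (D) C := disjoint_mul_inv_of_mem_cycleFactorsFinset hCmem
  have hg : g = D * C := by rw [hDdef]; group
  have haC : a ∈ C.support := mem_support.mpr hCa'
  have hCaC : C a ∈ C.support := apply_mem_support.mpr haC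
  have hsub : (Equiv.swap a (C a)).support ⊆ C.support := by
    rw [Equiv.Perm.support_swap (Ne.symm hCa')]
    intro x hx
    simp only [Finset.mem_insert, Finset.mem_singleton] at hx
    rcases hx with rfl | rfl <;> assumption
  have hdisjswap : Disjoint D (Equiv.swap a (C a)) := by
    rw [disjoint_iff_disjoint_support] at hdisj ⊢
    exact Finset.disjoint_of_subset_right hsub hdisj
  have hπ : Equiv.swap a (g a) * g = D * (Equiv.swap a (C a) * C) := by
    rw [← hCa, hg, ← mul_assoc, ← (hdisjswap.commute.eq), mul_assoc]
  have hsC : 2 ≤ C.support.card := hCcycle.two_le_card_support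
  have hsD : D.support.card + C.support.card = g.support.card := by
    rw [hg, hdisj.card_support_mul]
  have hsDC : g.support.card ≤ m := by
    simpa using Finset.card_le_card (Finset.subset_univ g.support)
  have hctg : Multiset.card g.cycleType = Multiset.card D.cycleType + 1 := by
    rw [hg, hdisj.cycleType_mul, hCcycle.cycleType]
    simp
  by_cases h2 : C (C a) = a
  · -- C is a swap
    have hCswap : C = Equiv.swap a (C a) := hCcycle.eq_swap_of_apply_apply_eq_self hCa' h2
    have h1 : Equiv.swap a (C a) * C = 1 := by rw [← hCswap, hCswap]; simp
    have hsC2 : C.support.card = 2 := by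
      rw [hCswap]; exact card_support_swap (Ne.symm hCa')
    rw [hπ, h1, mul_one]
    unfold cycleCount
    omega
  · -- splitting into a genuine cycle
    have hcyc : (Equiv.swap a (C a) * C).IsCycle := hCcycle.swap_mul hCa' h2
    have hsupp : (Equiv.swap a (C a) * C).support = C.support \ {a} :=
      support_swap_mul_eq C a h2
    have hcard : (Equiv.swap a (C a) * C).support.card = C.support.card - 1 := by
      rw [hsupp, Finset.card_sdiff_of_subset (by simpa using haC)]
      simp
    have hdisj2 : Disjoint D (Equiv.swap a (C a) * C) := by
      rw [disjoint_iff_disjoint_support] at hdisj ⊢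
      refine Finset.disjoint_of_subset_right ?_ hdisj
      rw [hsupp]; exact Finset.sdiff_subset
    have hct : Multiset.card (Equiv.swap a (g a) * g).cycleType
        = Multiset.card D.cycleType + 1 := by
      rw [hπ, hdisj2.cycleType_mul, hcyc.cycleType]
      simp
    have hs : (Equiv.swap a (g a) * g).support.card
        = D.support.card + (C.support.card - 1) := by
      rw [hπ, hdisj2.card_support_mul, hcard]
    unfold cycleCount
    rw [hct, hs]
    omega

lemma merge_aux {m : ℕ} (π : Equiv.Perm (Fin m)) (a b : Fin m) (hπ : π a = a) (hb : b ≠ a) :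
    cycleCount π = cycleCount (Equiv.swap a b * π) + 1 := by
  have hg : (Equiv.swap a b * π) a = b := by simp [hπ]
  have h := split_aux (Equiv.swap a b * π) a (by rw [hg]; exact hb)
  rw [hg, ← mul_assoc, Equiv.swap_mul_self, one_mul] at h
  omega

open Equiv Equiv.Perm in
lemma cycleCount_extendDomain {n : ℕ} (a : Fin (n + 1))
    (e : Fin n ≃ {x : Fin (n + 1) // x ≠ a}) (π : Equiv.Perm (Fin n)) :
    cycleCount (π.extendDomain e) = cycleCount π + 1 := by
  have h1 : (π.extendDomain e).cycleType = π.cycleType := cycleType_extendDomain e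
  have h2 : (π.extendDomain e).support.card = π.support.card :=
    card_support_extend_domain e
  have h3 : π.support.card ≤ n := by
    simpa using Finset.card_le_card (Finset.subset_univ π.support)
  unfold cycleCount
  rw [h1, h2]
  omega

open Equiv Equiv.Perm in
lemma fiber_fix {n : ℕ} (θ : ℝ) (a : Fin (n + 1)) :
    ∑ τ ∈ Finset.univ.filter (fun τ : Equiv.Perm (Fin (n + 1)) => τ a = a),
      θ ^ cycleCount τ
    = θ * ∑ π : Equiv.Perm (Fin n), θ ^ cycleCount π := by
  classical
  have hcard : Fintype.card {x : Fin (n + 1) // x ≠ a} = n := by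
    simp [Fintype.card_subtype_compl]
  let e : Fin n ≃ {x : Fin (n + 1) // x ≠ a} :=
    (Fintype.equivFinOfCardEq hcard).symm
  rw [Finset.mul_sum]
  refine (Finset.sum_bij (fun π _ => π.extendDomain e) ?_ ?_ ?_ ?_).symm
  · intro π _
    simp only [Finset.mem_filter, Finset.mem_univ, true_and]
    apply extendDomain_apply_not_subtype
    simp
  · intro π _ π' _ hee
    ext x
    have := congrArg (fun σ : Equiv.Perm (Fin (n+1)) => σ (e x)) hee
    have h2 : (e (π x) : Fin (n+1)) = e (π' x) := by
      simpa [extendDomain_apply_subtype] using this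
    exact congrArg Fin.val (e.injective (Subtype.ext h2))
  · intro τ hτ
    simp only [Finset.mem_filter, Finset.mem_univ, true_and] at hτ
    have h' : ∀ x : Fin (n + 1), x ≠ a ↔ τ x ≠ a := by
      intro x
      constructor
      · intro hx hc
        exact hx (τ.injective (by rw [hc, hτ]))
      · intro hx hc
        exact hx (by rw [hc, hτ])
    refine ⟨(Equiv.permCongr e.symm) (τ.subtypePerm (fun x => (h' x).symm)), Finset.mem_univ _, ?_⟩
    ext x
    by_cases hx : x = a
    · rw [hx, extendDomain_apply_not_subtype _ e (by simp), hτ]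
    · rw [extendDomain_apply_subtype _ e hx]
      simp [Equiv.permCongr_apply, subtypePerm_apply]
  · intro π _
    rw [cycleCount_extendDomain a e π, pow_succ]
    ring

open Equiv Equiv.Perm in
lemma fiber_ne {m : ℕ} (θ : ℝ) (a b : Fin m) (hb : b ≠ a) :
    θ * ∑ τ ∈ Finset.univ.filter (fun τ : Equiv.Perm (Fin m) => τ a = b),
      θ ^ cycleCount τ
    = ∑ τ ∈ Finset.univ.filter (fun τ : Equiv.Perm (Fin m) => τ a = a),
      θ ^ cycleCount τ := by
  classical
  rw [Finset.mul_sum]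
  refine Finset.sum_nbij' (fun τ => Equiv.swap a b * τ) (fun π => Equiv.swap a b * π)
    ?_ ?_ ?_ ?_ ?_
  · intro τ hτ
    simp only [Finset.mem_filter, Finset.mem_univ, true_and] at hτ ⊢
    simp [hτ]
  · intro π hπ
    simp only [Finset.mem_filter, Finset.mem_univ, true_and] at hπ ⊢
    simp [hπ]
  · intro τ _; rw [← mul_assoc, Equiv.swap_mul_self, one_mul]
  · intro π _; rw [← mul_assoc, Equiv.swap_mul_self, one_mul]
  · intro τ hτ
    simp only [Finset.mem_filter, Finset.mem_univ, true_and] at hτ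
    have hfix : (Equiv.swap a b * τ) a = a := by simp [hτ]
    have h := merge_aux (Equiv.swap a b * τ) a b hfix hb
    rw [← mul_assoc, Equiv.swap_mul_self, one_mul] at h
    rw [h, pow_succ]
    ring

lemma sum_pow_cycleCount (θ : ℝ) (hθ : 0 < θ) :
    ∀ n, ∑ τ : Equiv.Perm (Fin n), θ ^ cycleCount τ
      = ∏ k ∈ Finset.range n, (θ + k) := by
  intro n
  induction n with
  | zero =>
    rw [Finset.range_zero, Finset.prod_empty]
    rw [show (Finset.univ : Finset (Equiv.Perm (Fin 0))) = {1} from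
      Finset.eq_singleton_iff_unique_mem.mpr ⟨Finset.mem_univ _,
        fun τ _ => Subsingleton.elim _ _⟩]
    simp [cycleCount]
  | succ n ih =>
    have hfib := (Finset.sum_fiberwise Finset.univ (fun τ : Equiv.Perm (Fin (n+1)) => τ 0)
      (fun τ => θ ^ cycleCount τ))
    rw [← hfib]
    have hval : ∀ b : Fin (n + 1),
        ∑ τ ∈ Finset.univ.filter (fun τ : Equiv.Perm (Fin (n+1)) => τ 0 = b),
          θ ^ cycleCount τ
        = (if b = 0 then θ else 1) * ∏ k ∈ Finset.range n, (θ + k) := by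
      intro b
      by_cases hb : b = 0
      · rw [hb, if_pos rfl, fiber_fix θ 0, ih]
      · rw [if_neg hb]
        have := fiber_ne θ 0 b hb
        rw [fiber_fix θ 0, ih] at this
        have := mul_left_cancel₀ (ne_of_gt hθ) this
        rw [this, one_mul]
    rw [Finset.sum_congr rfl (fun b _ => hval b)]
    rw [← Finset.add_sum_erase _ _ (Finset.mem_univ (0 : Fin (n+1)))]
    rw [if_pos rfl]
    have herase : ∀ b ∈ Finset.univ.erase (0 : Fin (n+1)),
        (if b = 0 then θ else 1) * ∏ k ∈ Finset.range n, (θ + k)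
        = ∏ k ∈ Finset.range n, (θ + k) := by
      intro b hb
      rw [if_neg (Finset.ne_of_mem_erase hb), one_mul]
    rw [Finset.sum_congr rfl herase, Finset.sum_const, Finset.card_erase_of_mem
      (Finset.mem_univ _), Finset.card_univ, Fintype.card_fin]
    rw [Finset.prod_range_succ]
    push_cast
    ring

lemma fiber_eq {n : ℕ} (θ : ℝ) (hθ : 0 < θ) (a b : Fin (n + 1)) :
    ∑ τ ∈ Finset.univ.filter (fun τ : Equiv.Perm (Fin (n + 1)) => τ a = b),
      θ ^ cycleCount τ
    = (if b = a then θ else 1) * ∏ k ∈ Finset.range n, (θ + k) := by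
  by_cases hb : b = a
  · rw [hb, if_pos rfl, fiber_fix θ a, sum_pow_cycleCount θ hθ]
  · rw [if_neg hb, one_mul]
    have h := fiber_ne θ a b hb
    rw [fiber_fix θ a, sum_pow_cycleCount θ hθ] at h
    exact mul_left_cancel₀ (ne_of_gt hθ) h

lemma penrose_unique {p : ℕ} {W X Y : Matrix (Fin p) (Fin p) ℂ}
    (hX : W * X * W = W ∧ X * W * X = X ∧ (W * X)ᴴ = W * X ∧ (X * W)ᴴ = X * W)
    (hY : W * Y * W = W ∧ Y * W * Y = Y ∧ (W * Y)ᴴ = W * Y ∧ (Y * W)ᴴ = Y * W) :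
    X = Y := by
  obtain ⟨hX1, hX2, hX3, hX4⟩ := hX
  obtain ⟨hY1, hY2, hY3, hY4⟩ := hY
  have hWXY : W * X = W * Y := by
    calc W * X = (W * Y * W) * X := by rw [hY1]
    _ = (W * Y) * (W * X) := by rw [mul_assoc]
    _ = (W * Y)ᴴ * (W * X)ᴴ := by rw [hY3, hX3]
    _ = ((W * X) * (W * Y))ᴴ := by rw [← conjTranspose_mul]
    _ = ((W * X * W) * Y)ᴴ := by rw [← mul_assoc]
    _ = (W * Y)ᴴ := by rw [hX1]
    _ = W * Y := hY3
  have hXWY : X * W = Y * W := by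
    calc X * W = X * (W * Y * W) := by rw [hY1]
    _ = (X * W) * (Y * W) := by simp only [mul_assoc]
    _ = (X * W)ᴴ * (Y * W)ᴴ := by rw [hX4, hY4]
    _ = ((Y * W) * (X * W))ᴴ := by rw [← conjTranspose_mul]
    _ = (Y * (W * X * W))ᴴ := by simp only [mul_assoc]
    _ = (Y * W)ᴴ := by rw [hX1]
    _ = Y * W := hY4
  calc X = X * W * X := hX2.symm
  _ = X * (W * Y) := by rw [mul_assoc, hWXY]
  _ = (X * W) * Y := by rw [mul_assoc]
  _ = Y * W * Y := by rw [hXWY]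
  _ = Y := hY2

lemma pinv_eq {p : ℕ} {W X : Matrix (Fin p) (Fin p) ℂ}
    (hX : W * X * W = W ∧ X * W * X = X ∧ (W * X)ᴴ = W * X ∧ (X * W)ᴴ = X * W) :
    pinv W = X :=
  penrose_unique (Classical.epsilon_spec (⟨X, hX⟩ :
    ∃ X, W * X * W = W ∧ X * W * X = X ∧ (W * X)ᴴ = W * X ∧ (X * W)ᴴ = X * W)) hX

lemma pinv_diagonal {p : ℕ} (w : Fin p → ℂ) :
    pinv (Matrix.diagonal w) = Matrix.diagonal (fun i => (w i)⁻¹) := by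
  apply pinv_eq
  have e1 : (fun i => w i * (w i)⁻¹) = fun i => if w i = 0 then (0:ℂ) else 1 := by
    funext i; by_cases hi : w i = 0 <;> simp [hi, mul_inv_cancel₀]
  have e2 : (fun i => (w i)⁻¹ * w i) = fun i => if w i = 0 then (0:ℂ) else 1 := by
    funext i; by_cases hi : w i = 0 <;> simp [hi, inv_mul_cancel₀]
  have hsym : Matrix.diagonal w * Matrix.diagonal (fun i => (w i)⁻¹)
      = Matrix.diagonal (fun i => if w i = 0 then (0:ℂ) else 1) := by
    rw [Matrix.diagonal_mul_diagonal]; exact congrArg Matrix.diagonal e1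
  have hsym2 : Matrix.diagonal (fun i => (w i)⁻¹) * Matrix.diagonal w
      = Matrix.diagonal (fun i => if w i = 0 then (0:ℂ) else 1) := by
    rw [Matrix.diagonal_mul_diagonal]; exact congrArg Matrix.diagonal e2
  have hherm : (Matrix.diagonal (fun i => if w i = 0 then (0:ℂ) else 1))ᴴ
      = Matrix.diagonal (fun i => if w i = 0 then (0:ℂ) else 1) := by
    rw [Matrix.diagonal_conjTranspose]
    refine congrArg Matrix.diagonal (funext fun i => ?_)
    by_cases hi : w i = 0 <;> simp [hi]
  refine ⟨?_, ?_, ?_, ?_⟩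
  · rw [hsym, Matrix.diagonal_mul_diagonal]
    refine congrArg Matrix.diagonal (funext fun i => ?_)
    by_cases hi : w i = 0 <;> simp [hi]
  · rw [hsym2, Matrix.diagonal_mul_diagonal]
    refine congrArg Matrix.diagonal (funext fun i => ?_)
    by_cases hi : w i = 0 <;> simp [hi]
  · rw [hsym, hherm]
  · rw [hsym2, hherm]

lemma Vmat_diag {p m : ℕ} (σ : Fin p ↪ Fin m) (d : Fin m → ℂ) :
    Vmat σ * Matrix.diagonal d * (Vmat σ)ᵀ = Matrix.diagonal (fun i => d (σ i)) := by
  ext i k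
  rw [Matrix.mul_apply]
  simp only [Matrix.mul_apply, Vmat, Matrix.of_apply, Matrix.transpose_apply,
    Matrix.diagonal_apply, ite_mul, one_mul, zero_mul, mul_ite, mul_one, mul_zero]
  rw [Finset.sum_congr rfl (fun j _ => by
    rw [Finset.sum_eq_single j (fun b _ hb => by simp [hb]) (by simp)])]
  simp only [if_pos rfl]
  by_cases hik : i = k
  · subst hik
    rw [Finset.sum_eq_single (σ i) (fun b _ hb => by simp [hb]) (by simp)]
    simp
  · have : σ k ≠ σ i := fun hc => hik (σ.injective hc).symm
    rw [Finset.sum_eq_zero (fun j _ => ?_), if_neg hik]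
    by_cases h1 : j = σ i <;> by_cases h2 : j = σ k <;>
      simp_all
lemma Vmat_sandwich {p m : ℕ} (σ : Fin p ↪ Fin m) (v : Fin p → ℂ) (d : Fin m → ℂ)
    (hv : ∀ i, v i = (d (σ i))⁻¹) :
    (Vmat σ)ᵀ * Matrix.diagonal v * Vmat σ
      = Matrix.diagonal (fun j => if j ∈ Finset.image σ Finset.univ then (d j)⁻¹ else 0) := by
  classical
  ext j k
  rw [Matrix.mul_apply]
  simp only [Matrix.mul_apply, Vmat, Matrix.of_apply, Matrix.transpose_apply,
    Matrix.diagonal_apply, ite_mul, one_mul, zero_mul, mul_ite, mul_one, mul_zero]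
  rw [Finset.sum_congr rfl (fun i _ => by
    rw [Finset.sum_eq_single i (fun b _ hb => by simp [hb]) (by simp)])]
  simp only [if_pos rfl]
  by_cases hjk : j = k
  · subst hjk
    by_cases hmem : j ∈ Finset.image σ Finset.univ
    · obtain ⟨i₀, _, hi₀⟩ := Finset.mem_image.mp hmem
      rw [Finset.sum_eq_single i₀ (fun b _ hb => ?_) (by simp)]
      · rw [if_pos hi₀.symm, if_pos hi₀.symm, hv, hi₀]
        simp [hmem]
      · have : j ≠ σ b := by
          rw [← hi₀]; exact fun hc => hb (σ.injective hc.symm)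
        simp [this]
    · rw [Finset.sum_eq_zero (fun i _ => ?_)]
      simp [hmem]
      have : j ≠ σ i := fun hc => hmem (Finset.mem_image.mpr ⟨i, Finset.mem_univ _, hc.symm⟩)
      simp [this]
  · rw [Finset.sum_eq_zero (fun i _ => ?_), if_neg hjk]
    by_cases h1 : j = σ i <;> by_cases h2 : k = σ i <;> simp_all

lemma measure_mem {p m : ℕ} (h : p ≤ m) (θ : ℝ) (hθ : 0 < θ) (j : Fin m)
    (hj : (j : ℕ) < p) :
    ∑ σ ∈ Finset.univ.filter
        (fun σ : Fin p ↪ Fin m => j ∈ Finset.image σ Finset.univ),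
      extMeasure h θ σ = (θ + p - 1) / (θ + m - 1) := by
  classical
  obtain ⟨n, rfl⟩ : ∃ n, m = n + 1 := ⟨m - 1, by omega⟩
  rw [Finset.sum_filter]
  -- expand extMeasure and merge conditions
  have step1 : ∀ σ : Fin p ↪ Fin (n+1),
      (if j ∈ Finset.image σ Finset.univ then extMeasure h θ σ else 0)
      = ∑ τ : Equiv.Perm (Fin (n+1)),
          if j ∈ Finset.image σ Finset.univ ∧ (∀ i : Fin p, τ (Fin.castLE h i) = σ i)
          then ewens θ τ else 0 := by
    intro σ
    unfold extMeasure
    rw [Finset.sum_filter]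
    by_cases hq : j ∈ Finset.image σ Finset.univ
    · simp only [hq, if_true, true_and]
    · simp only [hq, if_false, false_and, Finset.sum_const_zero]
  rw [Finset.sum_congr rfl (fun σ _ => step1 σ), Finset.sum_comm]
  -- collapse σ-sum for each τ
  have step2 : ∀ τ : Equiv.Perm (Fin (n+1)),
      (∑ σ : Fin p ↪ Fin (n+1),
          if j ∈ Finset.image σ Finset.univ ∧ (∀ i : Fin p, τ (Fin.castLE h i) = σ i)
          then ewens θ τ else 0)
      = if ∃ i : Fin p, τ (Fin.castLE h i) = j then ewens θ τ else 0 := by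
    intro τ
    have hinj : Function.Injective (fun i : Fin p => τ (Fin.castLE h i)) :=
      fun a b hab => Fin.castLE_injective h (τ.injective hab)
    set στ : Fin p ↪ Fin (n+1) := ⟨fun i => τ (Fin.castLE h i), hinj⟩ with hστ
    have hpt : ∀ σ : Fin p ↪ Fin (n+1),
        (if j ∈ Finset.image σ Finset.univ ∧ (∀ i : Fin p, τ (Fin.castLE h i) = σ i)
          then ewens θ τ else 0)
        = if σ = στ then (if j ∈ Finset.image στ Finset.univ then ewens θ τ else 0)
          else 0 := by
      intro σ
      by_cases hR : σ = στ
      · rw [hR]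
        have hRtrue : ∀ i : Fin p, τ (Fin.castLE h i) = στ i := fun i => rfl
        simp [hRtrue]
      · have hnR : ¬ (∀ i : Fin p, τ (Fin.castLE h i) = σ i) := by
          intro hc
          exact hR (DFunLike.ext σ στ (fun i => (hc i).symm))
        simp [hnR, hR]
    rw [Finset.sum_congr rfl (fun σ _ => hpt σ), Finset.sum_ite_eq' Finset.univ στ]
    simp only [Finset.mem_univ, if_true]
    have : (j ∈ Finset.image στ Finset.univ) ↔ (∃ i : Fin p, τ (Fin.castLE h i) = j) := by
      simp [hστ, Finset.mem_image, eq_comm]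
    by_cases hex : ∃ i : Fin p, τ (Fin.castLE h i) = j
    · rw [if_pos (this.mpr hex), if_pos hex]
    · rw [if_neg (fun hc => hex (this.mp hc)), if_neg hex]
  rw [Finset.sum_congr rfl (fun τ _ => step2 τ)]
  -- split the existential as a sum over i
  have step3 : ∀ τ : Equiv.Perm (Fin (n+1)),
      (if ∃ i : Fin p, τ (Fin.castLE h i) = j then ewens θ τ else 0)
      = ∑ i : Fin p, if τ (Fin.castLE h i) = j then ewens θ τ else 0 := by
    intro τ
    by_cases hex : ∃ i : Fin p, τ (Fin.castLE h i) = j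
    · obtain ⟨i₀, hi₀⟩ := hex
      rw [if_pos ⟨i₀, hi₀⟩, Finset.sum_eq_single i₀ (fun b _ hb => ?_) (by simp),
        if_pos hi₀]
      have hbne : τ (Fin.castLE h b) ≠ j := by
        rw [← hi₀]
        exact fun hc => hb (Fin.castLE_injective h (τ.injective hc))
      rw [if_neg hbne]
    · rw [if_neg hex, Finset.sum_eq_zero]
      intro i _
      rw [if_neg (fun hc => hex ⟨i, hc⟩)]
  rw [Finset.sum_congr rfl (fun τ _ => step3 τ), Finset.sum_comm]
  -- evaluate inner fiber sums
  have step4 : ∀ i : Fin p,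
      (∑ τ : Equiv.Perm (Fin (n+1)), if τ (Fin.castLE h i) = j then ewens θ τ else 0)
      = (if j = Fin.castLE h i then θ else 1) * (∏ k ∈ Finset.range n, (θ + k))
        / (∏ k ∈ Finset.range (n+1), (θ + k)) := by
    intro i
    rw [← Finset.sum_filter]
    unfold ewens
    rw [← Finset.sum_div, fiber_eq θ hθ]
  rw [Finset.sum_congr rfl (fun i _ => step4 i)]
  rw [← Finset.sum_div, ← Finset.sum_mul]
  -- count: exactly one i has castLE i = j
  have hival : ∀ i : Fin p, (j = Fin.castLE h i) ↔ i = ⟨(j : ℕ), hj⟩ := by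
    intro i
    constructor
    · intro hc
      apply Fin.ext
      have := congrArg Fin.val hc
      simpa using this.symm
    · intro hc
      subst hc
      apply Fin.ext
      simp
  have hsum : (∑ i : Fin p, if j = Fin.castLE h i then θ else 1) = θ + p - 1 := by
    have : ∀ i : Fin p, (if j = Fin.castLE h i then θ else 1)
        = (if i = (⟨(j : ℕ), hj⟩ : Fin p) then θ - 1 else 0) + 1 := by
      intro i
      by_cases hi : i = (⟨(j : ℕ), hj⟩ : Fin p)
      · rw [if_pos ((hival i).mpr hi), if_pos hi]; ring
      · rw [if_neg (fun hc => hi ((hival i).mp hc)), if_neg hi]; ring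
    rw [Finset.sum_congr rfl (fun i _ => this i), Finset.sum_add_distrib,
      Finset.sum_ite_eq' Finset.univ, if_pos (Finset.mem_univ _), Finset.sum_const,
      Finset.card_univ, Fintype.card_fin]
    simp; ring
  rw [hsum, Finset.prod_range_succ]
  have hPn : (0:ℝ) < ∏ k ∈ Finset.range n, (θ + k) := by
    apply Finset.prod_pos
    intro k _
    positivity
  have hθn : (0:ℝ) < θ + n := by positivity
  rw [div_eq_div_iff (by positivity) (by push_cast; nlinarith)]
  push_cast
  ring

theorem stmt_14 {p m : ℕ} (h : p ≤ m) (θ : ℝ) (hθ : 0 < θ) (d : Fin m → ℂ)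
    (hd₁ : ∀ i : Fin m, (i : ℕ) < p → d i ≠ 0)
    (hd₂ : ∀ i : Fin m, p ≤ (i : ℕ) → d i = 0) :
    (∑ σ : Fin p ↪ Fin m,
        extMeasure h θ σ •
          ((Vmat σ)ᵀ * pinv (Vmat σ * Matrix.diagonal d * (Vmat σ)ᵀ) * Vmat σ))
      = ((p / (θ + m - 1) : ℝ) : ℂ) • Matrix.diagonal (fun i => (d i)⁻¹)
        + (((θ - 1) / (θ + m - 1) : ℝ) : ℂ) •
            Matrix.diagonal (fun i : Fin m => if (i : ℕ) < p then (d i)⁻¹ else 0) := by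
  classical
  have hsummand : ∀ σ : Fin p ↪ Fin m,
      (Vmat σ)ᵀ * pinv (Vmat σ * Matrix.diagonal d * (Vmat σ)ᵀ) * Vmat σ
      = Matrix.diagonal
          (fun j => if j ∈ Finset.image σ Finset.univ then (d j)⁻¹ else 0) := by
    intro σ
    rw [Vmat_diag, pinv_diagonal]
    exact Vmat_sandwich σ _ d (fun i => rfl)
  rw [Finset.sum_congr rfl (fun σ _ => by rw [hsummand σ])]
  ext j k
  simp only [Matrix.sum_apply, Matrix.smul_apply, Matrix.add_apply,
    Matrix.diagonal_apply, smul_eq_mul, Complex.real_smul]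
  by_cases hjk : j = k
  · subst hjk
    simp only [eq_self_iff_true, if_true]
    by_cases hp : (j : ℕ) < p
    · have key := measure_mem h θ hθ j hp
      have lhs_eq : (∑ σ : Fin p ↪ Fin m,
          (extMeasure h θ σ : ℂ) * (if j ∈ Finset.image σ Finset.univ then (d j)⁻¹ else 0))
          = ((∑ σ ∈ Finset.univ.filter
              (fun σ : Fin p ↪ Fin m => j ∈ Finset.image σ Finset.univ),
                extMeasure h θ σ : ℝ) : ℂ) * (d j)⁻¹ := by
        push_cast
        rw [Finset.sum_mul, Finset.sum_filter]
        refine Finset.sum_congr rfl (fun σ _ => ?_)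
        by_cases hmem : j ∈ Finset.image σ Finset.univ <;> simp [hmem]
      rw [lhs_eq, key, if_pos hp]
      have hcoeff : ((θ + p - 1) / (θ + m - 1) : ℝ)
          = (p / (θ + m - 1) : ℝ) + ((θ - 1) / (θ + m - 1) : ℝ) := by
        rw [← add_div]; ring_nf
      rw [hcoeff]
      push_cast
      ring
    · have hdj : d j = 0 := hd₂ j (le_of_not_gt hp)
      rw [if_neg hp]
      simp [hdj]
  · simp only [if_neg hjk]
    simp
end
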